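/- arXiv:2412.04819 — 4 statements merged into one kernel-verified Lean document; each statement's English description precedes it below -/
import Mathlib

section
/- For every θ ∈ [−π, π], |cos(e^{iθ})| ≥ cos(1). -/
open Complex Metric

noncomputable def phiNC (z : ℂ) : ℂ := (1 + z) / Complex.cos z

def Subord (f g : ℂ → ℂ) : Prop :=
  ∃ ω : ℂ → ℂ, AnalyticOnNhd ℂ ω (ball 0 1) ∧ ω 0 = 0 ∧
    (∀ z ∈ ball (0:ℂ) 1, ω z ∈ ball (0:ℂ) 1) ∧
    ∀ z ∈ ball (0:ℂ) 1, f z = g (ω z)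

def MemSnc (f : ℂ → ℂ) : Prop :=
  AnalyticOnNhd ℂ f (ball 0 1) ∧ f 0 = 0 ∧ deriv f 0 = 1 ∧
  Subord (fun z => z * deriv f z / f z) phiNC

def HasCoeffs (f : ℂ → ℂ) (a : ℕ → ℂ) : Prop :=
  a 0 = 0 ∧ a 1 = 1 ∧ ∀ z ∈ ball (0:ℂ) 1, HasSum (fun n => a n * z ^ n) (f z)

theorem stmt10 (θ : ℝ) (hθ : θ ∈ Set.Icc (-Real.pi) Real.pi) :
    Real.cos 1 ≤ ‖Complex.cos (Complex.exp (θ * Complex.I))‖ := by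
  have hre : (Complex.cos (Complex.exp (θ * Complex.I))).re
      = Real.cos (Real.cos θ) * Real.cosh (Real.sin θ) := by
    rw [Complex.cos_eq, Complex.exp_ofReal_mul_I_re, Complex.exp_ofReal_mul_I_im]
    simp [← Complex.ofReal_cos, ← Complex.ofReal_sin, ← Complex.ofReal_cosh,
      ← Complex.ofReal_sinh]
  have h1 : Real.cos 1 ≤ Real.cos (Real.cos θ) := by
    rw [← Real.cos_abs (Real.cos θ)]
    exact Real.cos_le_cos_of_nonneg_of_le_pi (abs_nonneg _)
      (by linarith [Real.pi_gt_three]) (Real.abs_cos_le_one θ)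
  have h2 : Real.cos (Real.cos θ) ≤ Real.cos (Real.cos θ) * Real.cosh (Real.sin θ) := by
    have hc : (0:ℝ) ≤ Real.cos (Real.cos θ) := by
      apply Real.cos_nonneg_of_mem_Icc
      constructor
      · linarith [Real.neg_one_le_cos θ, Real.pi_gt_three]
      · linarith [Real.cos_le_one θ, Real.pi_gt_three]
    nlinarith [Real.one_le_cosh (Real.sin θ)]
  calc Real.cos 1 ≤ (Complex.cos (Complex.exp (θ * Complex.I))).re := by
        rw [hre]; linarith
    _ ≤ |(Complex.cos (Complex.exp (θ * Complex.I))).re| := le_abs_self _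
    _ ≤ ‖_‖ := Complex.abs_re_le_norm _
end

section
/- For every z in the closed unit disc, Re((1+z)/cos z) ≥ 0, and for |z| = r < 1, (1−r)/cos r ≤ Re((1+z)/cos z) ≤ (1+r)/cos r. -/
open Complex Metric

lemma expT {t : ℝ} (h : |t| ≤ 1) :
    |Real.exp t - (1 + t + t^2/2 + t^3/6)| ≤ 5/96 * t^4 := by
  have H := Real.exp_bound h (by norm_num : 0 < 4)
  have h4 : |t|^4 = t^4 := by
    rw [pow_abs]; exact abs_of_nonneg (by positivity)
  simp only [Finset.sum_range_succ, Finset.sum_range_zero] at H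
  norm_num [Nat.factorial] at H
  calc |Real.exp t - (1 + t + t^2/2 + t^3/6)| ≤ |t|^4 * (5/(24*4)) := by
        convert H using 3 <;> norm_num
    _ = 5/96 * t^4 := by rw [h4]; ring

lemma coshT {y : ℝ} (h : |y| ≤ 1) : Real.cosh y ≤ 1 + y^2/2 + 5/96*y^4 := by
  have h1 := abs_le.1 (expT h)
  have h2 := abs_le.1 (expT (by rwa [abs_neg] : |(-y)| ≤ 1))
  rw [Real.cosh_eq]
  nlinarith [h1.2, h2.2]

lemma sinhT {y : ℝ} (h : |y| ≤ 1) : Real.sinh y ≤ y + y^3/6 + 5/96*y^4 := by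
  have h1 := abs_le.1 (expT h)
  have h2 := abs_le.1 (expT (by rwa [abs_neg] : |(-y)| ≤ 1))
  rw [Real.sinh_eq]
  nlinarith [h1.2, h2.1]

lemma cosT {t : ℝ} (h : |t| ≤ 1) : 1 - t^2/2 - 5/96*t^4 ≤ Real.cos t := by
  have h1 := (abs_le.1 (Real.cos_bound h)).1
  have h4 : |t|^4 = t^4 := by rw [pow_abs]; exact abs_of_nonneg (by positivity)
  nlinarith [h1]

lemma sinT {t : ℝ} (h : |t| ≤ 1) : t - t^3/6 - 5/96*t^4 ≤ Real.sin t := by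
  have h1 := (abs_le.1 (Real.sin_bound h)).1
  have h4 : |t|^4 = t^4 := by rw [pow_abs]; exact abs_of_nonneg (by positivity)
  have h5 : |t|^5 ≤ |t|^4 := pow_le_pow_of_le_one (abs_nonneg t) h (by norm_num)
  nlinarith [h1, h5, sq_nonneg (t^2)]

lemma sinU {t : ℝ} (h : 0 ≤ t) : Real.sin t ≤ t := by
  rcases eq_or_lt_of_le h with h'|h'
  · simp [← h']
  · exact (Real.sin_lt h').le

lemma sinhL {y : ℝ} (h : 0 ≤ y) : y ≤ Real.sinh y := Real.self_le_sinh_iff.mpr h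

-- bounds valid on [0,1]
lemma powLe {t : ℝ} (h0 : 0 ≤ t) (h1 : t ≤ 1) {n m : ℕ} (h : n ≤ m) : t^m ≤ t^n :=
  pow_le_pow_of_le_one h0 h1 h

lemma cosL {t : ℝ} (h0 : 0 ≤ t) (h1 : t ≤ 1) : 1 - 53/96*t^2 ≤ Real.cos t := by
  have h := cosT (by rw [_root_.abs_of_nonneg h0]; exact h1)
  have h4 := powLe h0 h1 (by norm_num : 2 ≤ 4)
  linarith
lemma cosPos {t : ℝ} (h0 : 0 ≤ t) (h1 : t ≤ 1) : 0 ≤ Real.cos t := by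
  nlinarith [cosL h0 h1, sq_nonneg t, powLe h0 h1 (by norm_num : 0 ≤ 2)]
lemma sinL {t : ℝ} (h0 : 0 ≤ t) (h1 : t ≤ 1) : t - 21/96*t^3 ≤ Real.sin t := by
  have h := sinT (by rw [_root_.abs_of_nonneg h0]; exact h1)
  have h4 := powLe h0 h1 (by norm_num : 3 ≤ 4)
  linarith
lemma sinPos {t : ℝ} (h0 : 0 ≤ t) (h1 : t ≤ 1) : 0 ≤ Real.sin t := by
  have h := sinL h0 h1
  have h4 := powLe h0 h1 (by norm_num : 1 ≤ 3)
  nlinarith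
lemma coshU {y : ℝ} (h0 : 0 ≤ y) (h1 : y ≤ 1) : Real.cosh y ≤ 1 + 53/96*y^2 := by
  have h := coshT (by rw [_root_.abs_of_nonneg h0]; exact h1)
  have h4 := powLe h0 h1 (by norm_num : 2 ≤ 4)
  linarith
lemma sinhSqU {y : ℝ} (h0 : 0 ≤ y) (h1 : y ≤ 1) : Real.sinh y^2 ≤ y^2 + (y^2)^2/2 := by
  have h2 := sinhT (by rw [_root_.abs_of_nonneg h0]; exact h1)
  have h3 := sinhL h0
  have hq : Real.sinh y^2 ≤ (y + y^3/6 + 5/96*y^4)^2 := by nlinarith [h2, h3, h0]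
  have h5 := powLe h0 h1 (by norm_num : 4 ≤ 5)
  have h6 := powLe h0 h1 (by norm_num : 4 ≤ 6)
  have h7 := powLe h0 h1 (by norm_num : 4 ≤ 7)
  have h8 := powLe h0 h1 (by norm_num : 4 ≤ 8)
  nlinarith [hq, h5, h6, h7, h8]
lemma ysinhL {y : ℝ} (h0 : 0 ≤ y) : y^2 ≤ y * Real.sinh y := by
  nlinarith [sinhL h0]
lemma ysinhU {y : ℝ} (h0 : 0 ≤ y) (h1 : y ≤ 1) : y * Real.sinh y ≤ y^2*(1+y^2/4) := by
  have h2 := sinhT (by rw [_root_.abs_of_nonneg h0]; exact h1)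
  have h5 := powLe h0 h1 (by norm_num : 4 ≤ 5)
  nlinarith [h2, h5, h0]

set_option maxHeartbeats 1000000 in
lemma hpoly1 {a d : ℝ} (ha : 0 ≤ a) (hd : 0 ≤ d) (hr : a + d ≤ 1) :
    0 ≤ (1-53/96*a^2)^2*(1-53/96*d) - a*(1-a)*(1+53/96*(d*(2*a+d))) + (1-53/96*(a+d)^2)*(a-21/96*a^2)*(2*a+d) - (1-(a+d))*(2*a+d)*(1+(d*(2*a+d))/2) := by
  have he : (0:ℝ) ≤ 1 - a - d := by linarith
  set e : ℝ := 1 - a - d with he_def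
  have he' : 0 ≤ e := he
  have hN : (0:ℝ) ≤ (1/1)*(a^0*d^0*e^5) + (331/96)*(a^0*d^1*e^4) + (115/24)*(a^0*d^2*e^3) + (51/16)*(a^0*d^3*e^2) + (31/24)*(a^0*d^4*e^1) + (43/96)*(a^0*d^5*e^0) + (2/1)*(a^1*d^0*e^4) + (139/24)*(a^1*d^1*e^3) + (559/96)*(a^1*d^2*e^2) + (103/32)*(a^1*d^3*e^1) + (27/16)*(a^1*d^4*e^0) + (91/48)*(a^2*d^0*e^3) + (26089/4608)*(a^2*d^1*e^2) + (13537/2304)*(a^2*d^2*e^1) + (33899/9216)*(a^2*d^3*e^0) + (13/4)*(a^3*d^0*e^2) + (16609/2304)*(a^3*d^1*e^1) + (6029/1152)*(a^3*d^2*e^0) + (27769/9216)*(a^4*d^0*e^1) + (3120499/884736)*(a^4*d^1*e^0) + (8299/9216)*(a^5*d^0*e^0) := (add_nonneg (add_nonneg (add_nonneg (add_nonneg (add_nonneg (add_nonneg (add_nonneg (add_nonneg (add_nonneg (add_nonneg (add_nonneg (add_nonneg (add_nonneg (add_nonneg (add_nonneg (add_nonneg (add_nonneg (add_nonneg (add_nonneg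 (add_nonneg (mul_nonneg (by norm_num) (mul_nonneg (mul_nonneg (pow_nonneg ha 0) (pow_nonneg hd 0)) (pow_nonneg he' 5))) (mul_nonneg (by norm_num) (mul_nonneg (mul_nonneg (pow_nonneg ha 0) (pow_nonneg hd 1)) (pow_nonneg he' 4)))) (mul_nonneg (by norm_num) (mul_nonneg (mul_nonneg (pow_nonneg ha 0) (pow_nonneg hd 2)) (pow_nonneg he' 3)))) (mul_nonneg (by norm_num) (mul_nonneg (mul_nonneg (pow_nonneg ha 0) (pow_nonneg hd 3)) (pow_nonneg he' 2)))) (mul_nonneg (by norm_num) (mul_nonneg (mul_nonneg (pow_nonneg ha 0) (pow_nonneg hd 4)) (pow_nonneg he' 1)))) (mul_nonneg (by norm_num) (mul_nonneg (mul_nonneg (pow_nonneg ha 0) (pow_nonneg hd 5)) (pow_nonneg he' 0)))) (mul_nonneg (by norm_num) (mul_nonneg (mul_nonneg (pow_nonneg ha 1) (pow_nonneg hd 0)) (pow_nonneg he' 4)))) (mul_nonneg (by norm_num) (mul_nonneg (mul_nonneg (pow_nonneg ha 1) (pow_nonneg hd 1)) (pow_nonneg he' 3)))) (mul_nonneg (by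 norm_num) (mul_nonneg (mul_nonneg (pow_nonneg ha 1) (pow_nonneg hd 2)) (pow_nonneg he' 2)))) (mul_nonneg (by norm_num) (mul_nonneg (mul_nonneg (pow_nonneg ha 1) (pow_nonneg hd 3)) (pow_nonneg he' 1)))) (mul_nonneg (by norm_num) (mul_nonneg (mul_nonneg (pow_nonneg ha 1) (pow_nonneg hd 4)) (pow_nonneg he' 0)))) (mul_nonneg (by norm_num) (mul_nonneg (mul_nonneg (pow_nonneg ha 2) (pow_nonneg hd 0)) (pow_nonneg he' 3)))) (mul_nonneg (by norm_num) (mul_nonneg (mul_nonneg (pow_nonneg ha 2) (pow_nonneg hd 1)) (pow_nonneg he' 2)))) (mul_nonneg (by norm_num) (mul_nonneg (mul_nonneg (pow_nonneg ha 2) (pow_nonneg hd 2)) (pow_nonneg he' 1)))) (mul_nonneg (by norm_num) (mul_nonneg (mul_nonneg (pow_nonneg ha 2) (pow_nonneg hd 3)) (pow_nonneg he' 0)))) (mul_nonneg (by norm_num) (mul_nonneg (mul_nonneg (pow_nonneg ha 3) (pow_nonneg hd 0)) (pow_nonneg he' 2)))) (mul_nonneg (by norm_num) (mul_nonneg (mul_nonneg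 (pow_nonneg ha 3) (pow_nonneg hd 1)) (pow_nonneg he' 1)))) (mul_nonneg (by norm_num) (mul_nonneg (mul_nonneg (pow_nonneg ha 3) (pow_nonneg hd 2)) (pow_nonneg he' 0)))) (mul_nonneg (by norm_num) (mul_nonneg (mul_nonneg (pow_nonneg ha 4) (pow_nonneg hd 0)) (pow_nonneg he' 1)))) (mul_nonneg (by norm_num) (mul_nonneg (mul_nonneg (pow_nonneg ha 4) (pow_nonneg hd 1)) (pow_nonneg he' 0)))) (mul_nonneg (by norm_num) (mul_nonneg (mul_nonneg (pow_nonneg ha 5) (pow_nonneg hd 0)) (pow_nonneg he' 0))))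
  have hEq : (1-53/96*a^2)^2*(1-53/96*d) - a*(1-a)*(1+53/96*(d*(2*a+d))) + (1-53/96*(a+d)^2)*(a-21/96*a^2)*(2*a+d) - (1-(a+d))*(2*a+d)*(1+(d*(2*a+d))/2) = (1/1)*(a^0*d^0*e^5) + (331/96)*(a^0*d^1*e^4) + (115/24)*(a^0*d^2*e^3) + (51/16)*(a^0*d^3*e^2) + (31/24)*(a^0*d^4*e^1) + (43/96)*(a^0*d^5*e^0) + (2/1)*(a^1*d^0*e^4) + (139/24)*(a^1*d^1*e^3) + (559/96)*(a^1*d^2*e^2) + (103/32)*(a^1*d^3*e^1) + (27/16)*(a^1*d^4*e^0) + (91/48)*(a^2*d^0*e^3) + (26089/4608)*(a^2*d^1*e^2) + (13537/2304)*(a^2*d^2*e^1) + (33899/9216)*(a^2*d^3*e^0) + (13/4)*(a^3*d^0*e^2) + (16609/2304)*(a^3*d^1*e^1) + (6029/1152)*(a^3*d^2*e^0) + (27769/9216)*(a^4*d^0*e^1) + (3120499/884736)*(a^4*d^1*e^0) + (8299/9216)*(a^5*d^0*e^0) := by rw [he_def]; ring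
  linarith [hN, hEq]

set_option maxHeartbeats 1000000 in
lemma hpoly2 {a d : ℝ} (ha : 0 ≤ a) (hd : 0 ≤ d) (hr : a + d ≤ 1) :
    0 ≤ (1-53/96*(a+d)^2)*(1+a)*(1-53/96*a^2) - a*((a+d)^2-a^2)*(1+((a+d)^2-a^2)/4) - (1-(a+d))*(1+((a+d)^2-a^2)+((a+d)^2-a^2)^2/2) := by
  have he : (0:ℝ) ≤ 1 - a - d := by linarith
  set e : ℝ := 1 - a - d with he_def
  have he' : 0 ≤ e := he
  have hN : (0:ℝ) ≤ (1/1)*(a^0*d^1*e^4) + (235/96)*(a^0*d^2*e^3) + (75/32)*(a^0*d^3*e^2) + (27/32)*(a^0*d^4*e^1) + (43/96)*(a^0*d^5*e^0) + (2/1)*(a^1*d^0*e^4) + (427/48)*(a^1*d^1*e^3) + (551/48)*(a^1*d^2*e^2) + (205/48)*(a^1*d^3*e^1) + (23/16)*(a^1*d^4*e^0) + (331/48)*(a^2*d^0*e^3) + (781/48)*(a^2*d^1*e^2) + (77401/9216)*(a^2*d^2*e^1) + (9433/9216)*(a^2*d^3*e^0) + (91/12)*(a^3*d^0*e^2) + (38041/4608)*(a^3*d^1*e^1)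 + (409/2304)*(a^3*d^2*e^0) + (25657/9216)*(a^4*d^0*e^1) + (7325/9216)*(a^4*d^1*e^0) + (1849/4608)*(a^5*d^0*e^0) := (add_nonneg (add_nonneg (add_nonneg (add_nonneg (add_nonneg (add_nonneg (add_nonneg (add_nonneg (add_nonneg (add_nonneg (add_nonneg (add_nonneg (add_nonneg (add_nonneg (add_nonneg (add_nonneg (add_nonneg (add_nonneg (add_nonneg (mul_nonneg (by norm_num) (mul_nonneg (mul_nonneg (pow_nonneg ha 0) (pow_nonneg hd 1)) (pow_nonneg he' 4))) (mul_nonneg (by norm_num) (mul_nonneg (mul_nonneg (pow_nonneg ha 0) (pow_nonneg hd 2)) (pow_nonneg he' 3)))) (mul_nonneg (by norm_num) (mul_nonneg (mul_nonneg (pow_nonneg ha 0) (pow_nonneg hd 3)) (pow_nonneg he' 2)))) (mul_nonneg (by norm_num) (mul_nonneg (mul_nonneg (pow_nonneg ha 0) (pow_nonneg hd 4)) (pow_nonneg he' 1)))) (mul_nonneg (by norm_num) (mul_nonneg (mul_nonneg (pow_nonneg ha 0) (pow_nonneg hd 5)) (pow_nonneg he' 0)))) (mul_nonneg (by norm_num)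 (mul_nonneg (mul_nonneg (pow_nonneg ha 1) (pow_nonneg hd 0)) (pow_nonneg he' 4)))) (mul_nonneg (by norm_num) (mul_nonneg (mul_nonneg (pow_nonneg ha 1) (pow_nonneg hd 1)) (pow_nonneg he' 3)))) (mul_nonneg (by norm_num) (mul_nonneg (mul_nonneg (pow_nonneg ha 1) (pow_nonneg hd 2)) (pow_nonneg he' 2)))) (mul_nonneg (by norm_num) (mul_nonneg (mul_nonneg (pow_nonneg ha 1) (pow_nonneg hd 3)) (pow_nonneg he' 1)))) (mul_nonneg (by norm_num) (mul_nonneg (mul_nonneg (pow_nonneg ha 1) (pow_nonneg hd 4)) (pow_nonneg he' 0)))) (mul_nonneg (by norm_num) (mul_nonneg (mul_nonneg (pow_nonneg ha 2) (pow_nonneg hd 0)) (pow_nonneg he' 3)))) (mul_nonneg (by norm_num) (mul_nonneg (mul_nonneg (pow_nonneg ha 2) (pow_nonneg hd 1)) (pow_nonneg he' 2)))) (mul_nonneg (by norm_num) (mul_nonneg (mul_nonneg (pow_nonneg ha 2) (pow_nonneg hd 2)) (pow_nonneg he' 1)))) (mul_nonneg (by norm_num) (mul_nonneg (mul_nonneg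 (pow_nonneg ha 2) (pow_nonneg hd 3)) (pow_nonneg he' 0)))) (mul_nonneg (by norm_num) (mul_nonneg (mul_nonneg (pow_nonneg ha 3) (pow_nonneg hd 0)) (pow_nonneg he' 2)))) (mul_nonneg (by norm_num) (mul_nonneg (mul_nonneg (pow_nonneg ha 3) (pow_nonneg hd 1)) (pow_nonneg he' 1)))) (mul_nonneg (by norm_num) (mul_nonneg (mul_nonneg (pow_nonneg ha 3) (pow_nonneg hd 2)) (pow_nonneg he' 0)))) (mul_nonneg (by norm_num) (mul_nonneg (mul_nonneg (pow_nonneg ha 4) (pow_nonneg hd 0)) (pow_nonneg he' 1)))) (mul_nonneg (by norm_num) (mul_nonneg (mul_nonneg (pow_nonneg ha 4) (pow_nonneg hd 1)) (pow_nonneg he' 0)))) (mul_nonneg (by norm_num) (mul_nonneg (mul_nonneg (pow_nonneg ha 5) (pow_nonneg hd 0)) (pow_nonneg he' 0))))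
  have hEq : (1-53/96*(a+d)^2)*(1+a)*(1-53/96*a^2) - a*((a+d)^2-a^2)*(1+((a+d)^2-a^2)/4) - (1-(a+d))*(1+((a+d)^2-a^2)+((a+d)^2-a^2)^2/2) = (1/1)*(a^0*d^1*e^4) + (235/96)*(a^0*d^2*e^3) + (75/32)*(a^0*d^3*e^2) + (27/32)*(a^0*d^4*e^1) + (43/96)*(a^0*d^5*e^0) + (2/1)*(a^1*d^0*e^4) + (427/48)*(a^1*d^1*e^3) + (551/48)*(a^1*d^2*e^2) + (205/48)*(a^1*d^3*e^1) + (23/16)*(a^1*d^4*e^0) + (331/48)*(a^2*d^0*e^3) + (781/48)*(a^2*d^1*e^2) + (77401/9216)*(a^2*d^2*e^1) + (9433/9216)*(a^2*d^3*e^0) + (91/12)*(a^3*d^0*e^2) + (38041/4608)*(a^3*d^1*e^1) + (409/2304)*(a^3*d^2*e^0) + (25657/9216)*(a^4*d^0*e^1) + (7325/9216)*(a^4*d^1*e^0) + (1849/4608)*(a^5*d^0*e^0) := by rw [he_def]; ring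
  linarith [hN, hEq]


lemma cosSqL {a : ℝ} (ha : 0 ≤ a) (ha1 : a ≤ 1) : (1-53/96*a^2)^2 ≤ Real.cos a^2 := by
  have h1 := cosL ha ha1
  have h2 := cosPos ha ha1
  have h3 : (0:ℝ) ≤ 1 - 53/96*a^2 := by nlinarith
  nlinarith

lemma k1aL {d y : ℝ} (hd : 0 ≤ d) (hd1 : d ≤ 1) :
    (1:ℝ) - 53/96*d^2 ≤ Real.cos d * Real.cosh y := by
  have h1 := cosL hd hd1
  have h2 := cosPos hd hd1
  have h3 := Real.one_le_cosh y
  nlinarith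

lemma k1bL {a d y : ℝ} (ha : 0 ≤ a) (ha1 : a ≤ 1) (hd : 0 ≤ d) (hd1 : d ≤ 1) :
    d*(1-53/96*d) ≤ (1-a)*(Real.cos d*Real.cosh y) - (1-(a+d)) := by
  have h1 := k1aL (y := y) hd hd1
  have h2 := mul_le_mul_of_nonneg_left h1 (show (0:ℝ) ≤ 1-a by linarith)
  nlinarith [mul_nonneg (mul_nonneg ha hd) hd]

lemma k1L {a d y : ℝ} (ha : 0 ≤ a) (ha1 : a ≤ 1) (hd : 0 ≤ d) (hd1 : d ≤ 1) :
    (1-53/96*a^2)^2*(d*(1-53/96*d)) ≤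
      (1-a)*(Real.cos a^2*(Real.cos d*Real.cosh y)) - (1-(a+d))*Real.cos a^2 := by
  have h1 := k1bL (y := y) ha ha1 hd hd1
  have hX0 : (0:ℝ) ≤ d*(1-53/96*d) := by nlinarith
  nlinarith [mul_le_mul_of_nonneg_left h1 (sq_nonneg (Real.cos a)),
    mul_le_mul_of_nonneg_right (cosSqL ha ha1) hX0]

lemma p1L {a : ℝ} (ha : 0 ≤ a) (ha1 : a ≤ 1) : Real.cos a * Real.sin a ≤ a := by
  have h1 := Real.cos_le_one a
  have h2 := sinU ha
  have h3 := sinPos ha ha1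
  have h4 := cosPos ha ha1
  nlinarith

lemma p2L {d y : ℝ} (hd : 0 ≤ d) (hd1 : d ≤ 1) (hy : 0 ≤ y) (hy1 : y ≤ 1) :
    Real.sin d * Real.cosh y ≤ d*(1+53/96*y^2) := by
  have h1 := sinU hd
  have h2 := coshU hy hy1
  have h3 := sinPos hd hd1
  have h4 := Real.one_le_cosh y
  nlinarith

lemma keyNeg {a d y : ℝ} (ha : 0 ≤ a) (hd : 0 ≤ d) (hr1 : a + d ≤ 1) (hy : 0 ≤ y)
    (hy2 : y^2 = d*(2*a+d)) :
    (1-(a+d))*(Real.cos a^2 + Real.sinh y^2) ≤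
      Real.cos (a+d) * ((1-a)*(Real.cos a*Real.cosh y) + y*(Real.sin a*Real.sinh y)) := by
  have ha1 : a ≤ 1 := by linarith
  have hd1 : d ≤ 1 := by linarith
  have hr0 : 0 ≤ a + d := by linarith
  have hy1 : y ≤ 1 := by nlinarith
  have k1 := k1L (y := y) ha ha1 hd hd1
  have k2 : (1-a)*((Real.cos a*Real.sin a)*(Real.sin d*Real.cosh y)) ≤
      (1-a)*(a*(d*(1+53/96*(d*(2*a+d))))) := by
    have hm : (Real.cos a*Real.sin a)*(Real.sin d*Real.cosh y) ≤ a*(d*(1+53/96*y^2)) :=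
      mul_le_mul (p1L ha ha1) (p2L hd hd1 hy hy1)
        (mul_nonneg (sinPos hd hd1) (by linarith [Real.one_le_cosh y])) ha
    rw [hy2] at hm
    exact mul_le_mul_of_nonneg_left hm (by linarith)
  have hsal0 : (0:ℝ) ≤ a - 21/96*a^2 := by nlinarith
  have hsal : a - 21/96*a^2 ≤ Real.sin a := by
    have := sinL ha ha1
    nlinarith [powLe ha ha1 (by norm_num : 2 ≤ 3)]
  have hcrl0 : (0:ℝ) ≤ 1 - 53/96*(a+d)^2 := by nlinarith
  have hyS := ysinhL hy
  have k3 : (1-53/96*(a+d)^2)*((a-21/96*a^2)*(d*(2*a+d))) ≤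
      Real.cos (a+d)*(y*(Real.sin a*Real.sinh y)) := by
    have h1 : (a-21/96*a^2)*(d*(2*a+d)) ≤ Real.sin a * (y*Real.sinh y) := by
      rw [← hy2]
      exact mul_le_mul hsal hyS (by positivity) (sinPos ha ha1)
    calc (1-53/96*(a+d)^2)*((a-21/96*a^2)*(d*(2*a+d)))
        ≤ Real.cos (a+d)*(Real.sin a * (y*Real.sinh y)) :=
          mul_le_mul (cosL hr0 hr1) h1 (by positivity) (cosPos hr0 hr1)
      _ = Real.cos (a+d)*(y*(Real.sin a*Real.sinh y)) := by ring
  have k4 : (1-(a+d))*Real.sinh y^2 ≤ (1-(a+d))*((d*(2*a+d)) + (d*(2*a+d))^2/2) := by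
    have h := mul_le_mul_of_nonneg_left (sinhSqU hy hy1) (show (0:ℝ) ≤ 1-(a+d) by linarith)
    rw [hy2] at h
    exact h
  have hp := mul_nonneg hd (hpoly1 ha hd hr1)
  have hcr_eq := Real.cos_add a d
  rw [hcr_eq] at k3 ⊢
  linarith [k1, k2, k3, k4, hp]

lemma keyPos {a r y : ℝ} (ha : 0 ≤ a) (har : a ≤ r) (hr1 : r ≤ 1) (hy : 0 ≤ y)
    (hy2 : y^2 = r^2 - a^2) :
    (1-r)*(Real.cos a^2 + Real.sinh y^2) ≤
      Real.cos r * ((1+a)*(Real.cos a*Real.cosh y) - y*(Real.sin a*Real.sinh y)) := by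
  have ha1 : a ≤ 1 := by linarith
  have hr0 : 0 ≤ r := by linarith
  have hy1 : y ≤ 1 := by nlinarith
  have hca0 := cosPos ha ha1
  have hC1 := Real.one_le_cosh y
  have hcal0 : (0:ℝ) ≤ 1 - 53/96*a^2 := by nlinarith
  have m1 : (1-53/96*r^2)*((1+a)*(1-53/96*a^2)) ≤
      Real.cos r*((1+a)*(Real.cos a*Real.cosh y)) := by
    have i1 : (1-53/96*a^2) ≤ Real.cos a*Real.cosh y := by
      nlinarith [cosL ha ha1]
    have i2 : (1+a)*(1-53/96*a^2) ≤ (1+a)*(Real.cos a*Real.cosh y) :=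
      mul_le_mul_of_nonneg_left i1 (by linarith)
    exact mul_le_mul (cosL hr0 hr1) i2 (by positivity) (cosPos hr0 hr1)
  have m2 : Real.cos r*(y*(Real.sin a*Real.sinh y)) ≤ a*((r^2-a^2)*(1+(r^2-a^2)/4)) := by
    have i1 : y*(Real.sin a*Real.sinh y) ≤ a*(y^2*(1+y^2/4)) := by
      have := mul_le_mul (sinU ha) (ysinhU hy hy1) (ysinhL hy |> le_trans (by positivity)) ha
      nlinarith [this]
    have i2 : 0 ≤ y*(Real.sin a*Real.sinh y) := by
      have := sinhL hy
      exact mul_nonneg hy (mul_nonneg (sinPos ha ha1) (by linarith))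
    have i3 : Real.cos r*(y*(Real.sin a*Real.sinh y)) ≤ y*(Real.sin a*Real.sinh y) := by
      nlinarith [Real.cos_le_one r, i2, cosPos hr0 hr1]
    rw [hy2] at i1
    linarith
  have m3 : (1-r)*Real.cos a^2 ≤ (1-r)*1 :=
    mul_le_mul_of_nonneg_left (Real.cos_sq_le_one a) (by linarith)
  have m4 : (1-r)*Real.sinh y^2 ≤ (1-r)*((r^2-a^2) + (r^2-a^2)^2/2) := by
    have h := mul_le_mul_of_nonneg_left (sinhSqU hy hy1) (show (0:ℝ) ≤ 1-r by linarith)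
    rw [hy2] at h
    exact h
  have hp := hpoly2 ha (show (0:ℝ) ≤ r - a by linarith) (show a + (r-a) ≤ 1 by linarith)
  have hra : a + (r - a) = r := by ring
  rw [hra] at hp
  linarith [m1, m2, m3, m4, hp]

lemma keyA {x y : ℝ} (hxy : x^2+y^2 ≤ 1) (hy : 0 ≤ y) :
    0 ≤ (1+x)*(Real.cos x*Real.cosh y) - y*(Real.sin x*Real.sinh y) := by
  have hy1 : y ≤ 1 := by nlinarith
  have hS0 : 0 ≤ Real.sinh y := le_trans hy (sinhL hy)
  rcases le_total x 0 with hx|hx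
  · have hx1 : -1 ≤ x := by nlinarith
    have h1 : 0 ≤ Real.cos x := by
      rw [show x = -(-x) by ring, Real.cos_neg]; exact cosPos (by linarith) (by linarith)
    have h2 : Real.sin x ≤ 0 := by
      rw [show x = -(-x) by ring, Real.sin_neg]
      simp only [neg_nonpos]
      exact sinPos (by linarith) (by linarith)
    have h3 := Real.one_le_cosh y
    nlinarith [mul_nonneg (mul_nonneg (show (0:ℝ) ≤ 1+x by nlinarith) h1) (by linarith : (0:ℝ) ≤ Real.cosh y),
      mul_nonneg (mul_nonneg hy hS0) (neg_nonneg.2 h2)]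
  · have hx1 : x ≤ 1 := by nlinarith
    have h1 : (1-53/96*x^2) ≤ (1+x)*(Real.cos x*Real.cosh y) := by
      have i1 : (1-53/96*x^2) ≤ Real.cos x*Real.cosh y := by
        nlinarith [cosL hx hx1, Real.one_le_cosh y, cosPos hx hx1]
      nlinarith [i1, mul_nonneg (cosPos hx hx1) (by linarith [Real.one_le_cosh y] : (0:ℝ) ≤ Real.cosh y)]
    have h2 : y*(Real.sin x*Real.sinh y) ≤ x*((1-x^2)*(1+(1-x^2)/4)) := by
      have i1 : y*(Real.sin x*Real.sinh y) ≤ x*(y^2*(1+y^2/4)) := by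
        have := mul_le_mul (sinU hx) (ysinhU hy hy1) (ysinhL hy |> le_trans (by positivity)) hx
        nlinarith [this]
      have i2 : x*(y^2*(1+y^2/4)) ≤ x*((1-x^2)*(1+(1-x^2)/4)) := by
        have hu : y^2 ≤ 1-x^2 := by nlinarith
        have : y^2*(1+y^2/4) ≤ (1-x^2)*(1+(1-x^2)/4) := by nlinarith [sq_nonneg y]
        exact mul_le_mul_of_nonneg_left this hx
      linarith
    have h3 : (0:ℝ) ≤ (1-53/96*x^2) - x*((1-x^2)*(1+(1-x^2)/4)) := by
      nlinarith [sq_nonneg (x-1/2), sq_nonneg (x-1), sq_nonneg x, mul_nonneg hx (sq_nonneg (x-1)), mul_nonneg hx (sq_nonneg (x+1)), mul_nonneg (mul_nonneg hx hx) hx]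
    linarith

lemma cos_re' (z : ℂ) : (Complex.cos z).re = Real.cos z.re * Real.cosh z.im := by
  rw [Complex.cos_eq]; simp [Complex.cos_ofReal_re, Complex.cosh_ofReal_re]

lemma cos_im' (z : ℂ) : (Complex.cos z).im = -(Real.sin z.re * Real.sinh z.im) := by
  rw [Complex.cos_eq]; simp [Complex.sin_ofReal_re, Complex.sinh_ofReal_re]

lemma normSq_cos (z : ℂ) :
    Complex.normSq (Complex.cos z) = Real.cos z.re^2 + Real.sinh z.im^2 := by
  rw [Complex.normSq_apply, cos_re', cos_im']
  have h1 := Real.sin_sq_add_cos_sq z.re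
  have h2 := Real.cosh_sq z.im
  nlinarith [h1, h2]


lemma phiNC_re (z : ℂ) :
    (phiNC z).re = ((1+z.re) * (Real.cos z.re * Real.cosh z.im)
        + z.im * (-(Real.sin z.re * Real.sinh z.im))) / (Real.cos z.re^2 + Real.sinh z.im^2) := by
  rw [phiNC, Complex.div_re, ← add_div, normSq_cos, cos_re', cos_im']
  simp [Complex.add_re, Complex.add_im, Complex.one_re, Complex.one_im]


lemma keyB {x y r : ℝ} (hr0 : 0 ≤ r) (hr1 : r < 1) (hxy : x^2 + y^2 = r^2) (hy : 0 ≤ y) :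
    (1-r)*(Real.cos x^2 + Real.sinh y^2) ≤
      Real.cos r * ((1+x)*(Real.cos x*Real.cosh y) + y*(-(Real.sin x*Real.sinh y))) := by
  rcases le_total x 0 with hx|hx
  · have hax : 0 ≤ -x := by linarith
    have hd : 0 ≤ r + x := by nlinarith [sq_nonneg (x+r), sq_nonneg y]
    have hsum : -x + (r+x) ≤ 1 := by linarith
    have hy2 : y^2 = (r+x)*(2*(-x)+(r+x)) := by nlinarith [hxy]
    have H := keyNeg hax hd hsum hy hy2
    rw [show -x + (r+x) = r by ring, Real.cos_neg, Real.sin_neg] at H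
    nlinarith [H]
  · have H := keyPos hx (show x ≤ r by nlinarith [sq_nonneg (r-x), sq_nonneg y])
      hr1.le hy (by nlinarith [hxy] : y^2 = r^2 - x^2)
    nlinarith [H]

lemma keyB' {x y r : ℝ} (hr0 : 0 ≤ r) (hr1 : r < 1) (hxy : x^2 + y^2 = r^2) :
    (1-r)*(Real.cos x^2 + Real.sinh y^2) ≤
      Real.cos r * ((1+x)*(Real.cos x*Real.cosh y) + y*(-(Real.sin x*Real.sinh y))) := by
  rcases le_total 0 y with hy|hy
  · exact keyB hr0 hr1 hxy hy
  · have h' : x^2 + (-y)^2 = r^2 := by nlinarith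
    have H := keyB hr0 hr1 h' (by linarith : 0 ≤ -y)
    rw [Real.cosh_neg, Real.sinh_neg] at H
    nlinarith [H]


theorem stmt12 :
    (∀ z ∈ closedBall (0:ℂ) 1, 0 ≤ (phiNC z).re) ∧
    ∀ r : ℝ, 0 ≤ r → r < 1 → ∀ z : ℂ, ‖z‖ = r →
      (1 - r) / Real.cos r ≤ (phiNC z).re ∧ (phiNC z).re ≤ (1 + r) / Real.cos r := by
  constructor
  · intro z hz
    have hz1 : ‖z‖ ≤ 1 := by
      rw [mem_closedBall, dist_zero_right] at hz
      exact hz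
    have hxy : z.re^2 + z.im^2 ≤ 1 := by
      have h := Complex.sq_norm z
      rw [Complex.normSq_apply] at h
      nlinarith [hz1, norm_nonneg z]
    rw [phiNC_re]
    apply div_nonneg _ (by positivity)
    rcases le_total 0 z.im with hy|hy
    · have H := keyA hxy hy
      nlinarith [H]
    · have h' : z.re^2 + (-z.im)^2 ≤ 1 := by nlinarith
      have H := keyA h' (by linarith : 0 ≤ -z.im)
      rw [Real.cosh_neg, Real.sinh_neg] at H
      nlinarith [H]
  · intro r hr0 hr1 z habs
    have hxy : z.re^2 + z.im^2 = r^2 := by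
      have h := Complex.sq_norm z
      rw [Complex.normSq_apply, habs] at h
      nlinarith [h]
    have hxabs : |z.re| ≤ r := by
      rw [abs_le]
      constructor <;> nlinarith [sq_nonneg (z.re+r), sq_nonneg (z.re-r), sq_nonneg z.im]
    have hcosr : 0 < Real.cos r := by nlinarith [cosL hr0 hr1.le]
    have hD : 0 < Real.cos z.re^2 + Real.sinh z.im^2 := by
      have ha2 : |z.re|^2 ≤ 1 := by nlinarith [abs_nonneg z.re, le_trans hxabs hr1.le]
      have h := cosL (abs_nonneg z.re) (le_trans hxabs hr1.le)
      rw [Real.cos_abs] at h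
      have h' : (43:ℝ)/96 ≤ Real.cos z.re := by nlinarith
      nlinarith [sq_nonneg (Real.sinh z.im), mul_le_mul h' h' (by norm_num) (le_trans (by norm_num) h')]
    constructor
    · rw [phiNC_re, div_le_div_iff₀ hcosr hD]
      have H := keyB' hr0 hr1 hxy
      nlinarith [H]
    · calc (phiNC z).re ≤ ‖phiNC z‖ := Complex.re_le_norm _
        _ = ‖1+z‖ / ‖Complex.cos z‖ := by rw [phiNC, norm_div]
        _ ≤ (1+r)/Real.cos r := by
            have h1 : ‖1+z‖ ≤ 1 + r := by
              calc ‖1+z‖ ≤ ‖(1:ℂ)‖ + ‖z‖ := norm_add_le 1 z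
                _ = 1 + r := by rw [norm_one, habs]
            have h2 : Real.cos r ≤ ‖Complex.cos z‖ := by
              have hsq : (Real.cos r)^2 ≤ ‖Complex.cos z‖^2 := by
                rw [Complex.sq_norm, normSq_cos]
                have hcx : Real.cos r ≤ Real.cos z.re := by
                  have h3 := Real.cos_le_cos_of_nonneg_of_le_pi (abs_nonneg z.re)
                    (show r ≤ Real.pi by linarith [Real.pi_gt_three]) hxabs
                  rwa [Real.cos_abs] at h3
                nlinarith [sq_nonneg (Real.sinh z.im), hcosr, hcx]
              nlinarith [hsq, norm_nonneg (Complex.cos z), hcosr]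
            exact div_le_div₀ (by linarith) h1 hcosr h2
end

section
/- For all z in the unit disc, Re((1+z)/cos z) ≤ 4 cos(1)/(1 + cos(2)). -/
set_option maxHeartbeats 1000000


open Complex Metric

lemma key_ineq (x y : ℝ) (h : x ^ 2 + y ^ 2 < 1) :
    ((1 + x) * (Real.cos x * Real.cosh y) + y * (-(Real.sin x * Real.sinh y))) /
      ((Real.cos x * Real.cosh y) ^ 2 + (Real.sin x * Real.sinh y) ^ 2)
      ≤ 4 * Real.cos 1 / (1 + Real.cos 2) := by
  have hc1 : 0 < Real.cos 1 := Real.cos_one_pos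
  have hcos2 : Real.cos 2 = 2 * Real.cos 1 ^ 2 - 1 := by
    have := Real.cos_two_mul 1
    norm_num at this
    linarith
  have hx2 : x ^ 2 < 1 := by nlinarith [sq_nonneg y]
  have hy2 : y ^ 2 < 1 := by nlinarith [sq_nonneg x]
  have hxabs : |x| ≤ 1 := by
    rw [abs_le]; constructor <;> nlinarith [sq_nonneg (x + 1), sq_nonneg (x - 1)]
  -- cos 1 ≤ cos x
  have hcx : Real.cos 1 ≤ Real.cos x := by
    rw [← Real.cos_abs x]
    exact Real.cos_le_cos_of_nonneg_of_le_pi (abs_nonneg x)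
      (by linarith [Real.pi_gt_three]) hxabs
  have hcxle : Real.cos x ≤ 1 := Real.cos_le_one x
  set s := Real.sinh y with hs
  set c := Real.cos x with hc
  have hcoshsq : Real.cosh y ^ 2 = s ^ 2 + 1 := Real.cosh_sq y
  have hcosh1 : 1 ≤ Real.cosh y := Real.one_le_cosh y
  have hcoshle : Real.cosh y ≤ 1 + s ^ 2 / 2 := by nlinarith [sq_nonneg (s ^ 2)]
  -- |y| ≤ |sinh y|
  have hys : |y| ≤ |s| := by
    rcases le_or_gt 0 y with hy | hy
    · have hs0 : 0 ≤ s := by rw [hs]; simpa using Real.sinh_le_sinh.mpr hy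
      rw [_root_.abs_of_nonneg hy, _root_.abs_of_nonneg hs0]
      exact Real.self_le_sinh_iff.mpr hy
    · have hsy : s ≤ 0 := by rw [hs]; simpa using Real.sinh_le_sinh.mpr hy.le
      have h2 : -y ≤ Real.sinh (-y) := Real.self_le_sinh_iff.mpr (by linarith)
      rw [Real.sinh_neg] at h2
      rw [_root_.abs_of_neg hy, _root_.abs_of_nonpos hsy]
      linarith
  -- cross term bound
  have hsin : |Real.sin x| ≤ 1 := abs_le.mpr ⟨Real.neg_one_le_sin x, Real.sin_le_one x⟩
  have hcross : -(y * (Real.sin x * s)) ≤ s ^ 2 := by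
    have h1 : |y * (Real.sin x * s)| ≤ |s| * |s| := by
      rw [abs_mul, abs_mul]
      have h2 : |Real.sin x| * |s| ≤ 1 * |s| := mul_le_mul_of_nonneg_right hsin (abs_nonneg s)
      have h3 := mul_le_mul hys h2 (by positivity) (abs_nonneg s)
      nlinarith [h3]
    nlinarith [neg_abs_le (y * (Real.sin x * s)), _root_.sq_abs s]
  -- denominator identity
  have hsincos : Real.sin x ^ 2 + c ^ 2 = 1 := Real.sin_sq_add_cos_sq x
  have hD : (c * Real.cosh y) ^ 2 + (Real.sin x * s) ^ 2 = c ^ 2 + s ^ 2 := by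
    nlinarith [hcoshsq, hsincos]
  rw [hD, hcos2]
  have hDpos : (0:ℝ) < c ^ 2 + s ^ 2 := by nlinarith [sq_nonneg s]
  have hden : (0:ℝ) < 1 + (2 * Real.cos 1 ^ 2 - 1) := by nlinarith
  rw [div_le_div_iff₀ hDpos hden]
  have hx1 : 1 + x ≤ 2 := by nlinarith
  have hx0 : 0 ≤ 1 + x := by nlinarith
  -- numerator bound
  have hnum : (1 + x) * (c * Real.cosh y) + y * (-(Real.sin x * s)) ≤ 2 * c + 2 * s ^ 2 := by
    have h1 : (1 + x) * (c * Real.cosh y) ≤ 2 * (c * (1 + s ^ 2 / 2)) := by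
      have hcpos : 0 < c := lt_of_lt_of_le hc1 hcx
      calc (1 + x) * (c * Real.cosh y) ≤ 2 * (c * Real.cosh y) := by
            have : 0 ≤ c * Real.cosh y := by positivity
            nlinarith
        _ ≤ 2 * (c * (1 + s ^ 2 / 2)) := by nlinarith
    nlinarith
  have hA : ((1 + x) * (c * Real.cosh y) + y * (-(Real.sin x * s))) * (1 + (2 * Real.cos 1 ^ 2 - 1))
      ≤ (2 * c + 2 * s ^ 2) * (2 * Real.cos 1 ^ 2) := by
    have : (1 + (2 * Real.cos 1 ^ 2 - 1)) = 2 * Real.cos 1 ^ 2 := by ring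
    rw [this]
    exact mul_le_mul_of_nonneg_right hnum (by positivity)
  have hB : Real.cos 1 * c ≤ c ^ 2 := by nlinarith
  have hC : Real.cos 1 * s ^ 2 ≤ s ^ 2 := by nlinarith [Real.cos_le_one 1, sq_nonneg s]
  nlinarith [hA, hB, hC, hc1, mul_le_mul_of_nonneg_left hB hc1.le,
    mul_le_mul_of_nonneg_left hC hc1.le]

theorem stmt13 (z : ℂ) (hz : z ∈ ball (0:ℂ) 1) :
    (phiNC z).re ≤ 4 * Real.cos 1 / (1 + Real.cos 2) := by
  have hz' : z.re ^ 2 + z.im ^ 2 < 1 := by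
    have := mem_ball_zero_iff.mp hz
    have h2 : ‖z‖ < 1 := this
    have := Complex.sq_norm z
    have hn : Complex.normSq z < 1 := by
      rw [← Complex.sq_norm]; nlinarith [norm_nonneg z]
    simpa [Complex.normSq_apply, sq] using hn
  have := key_ineq z.re z.im hz'
  have hre : (phiNC z).re =
      ((1 + z.re) * (Real.cos z.re * Real.cosh z.im) +
        z.im * (-(Real.sin z.re * Real.sinh z.im))) /
      ((Real.cos z.re * Real.cosh z.im) ^ 2 + (Real.sin z.re * Real.sinh z.im) ^ 2) := by
    have hco : Complex.cos z = (Real.cos z.re * Real.cosh z.im : ℝ) +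
        (-(Real.sin z.re * Real.sinh z.im) : ℝ) * Complex.I := by
      rw [Complex.cos_eq]
      push_cast [← Complex.ofReal_cos, ← Complex.ofReal_cosh, ← Complex.ofReal_sin,
        ← Complex.ofReal_sinh]
      ring
    rw [phiNC, Complex.div_re, Complex.normSq_apply, hco]
    simp [Complex.add_re, Complex.add_im, Complex.mul_re, Complex.mul_im, Complex.cos_ofReal_re, Complex.sin_ofReal_re, Complex.sinh_ofReal_re, Complex.cosh_ofReal_re]
    ring
  rw [hre]
  exact this
end

section
/- The function Q(z) = (1 + z − cos z)/cos z is starlike in the unit disc: Q(0)=0, Q'(0)≠0, and Re(z Q'(z)/Q(z)) > 0 for all z ∈ 𝔻 \ {0}. -/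
open Complex Metric

noncomputable def Qnc (z : ℂ) : ℂ := (1 + z - Complex.cos z) / Complex.cos z

/-! ### Auxiliary material -/

namespace Complex

noncomputable def abs : AbsoluteValue ℂ ℝ := IsAbsoluteValue.toAbsoluteValue (norm : ℂ → ℝ)

theorem norm_eq_abs (z : ℂ) : ‖z‖ = abs z := rfl

theorem abs.pos {z : ℂ} (h : z ≠ 0) : 0 < abs z := by
  rw [← norm_eq_abs]; exact norm_pos_iff.mpr h

theorem abs.sub_le_add (a b : ℂ) : abs (a - b) ≤ abs a + abs b := AbsoluteValue.sub_le_add _ a b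

theorem abs_I : abs I = 1 := by rw [← norm_eq_abs]; simp

theorem abs_two : abs 2 = 2 := by rw [← norm_eq_abs]; simp

@[simp] theorem abs_ofNat (n : ℕ) [n.AtLeastTwo] : abs (no_index (OfNat.ofNat n : ℂ)) = OfNat.ofNat n := by
  rw [← norm_eq_abs]; simp

theorem abs_ofReal (r : ℝ) : abs (r : ℂ) = |r| := by rw [← norm_eq_abs]; simp

theorem abs_conj (z : ℂ) : abs ((starRingEnd ℂ) z) = abs z := by
  rw [← norm_eq_abs, ← norm_eq_abs]; simp

theorem sq_abs (z : ℂ) : abs z ^ 2 = normSq z := by rw [← norm_eq_abs]; exact Complex.sq_norm z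

theorem abs_re_le_abs (z : ℂ) : |z.re| ≤ abs z := by rw [← norm_eq_abs]; exact Complex.abs_re_le_norm z

end Complex

noncomputable def auxN5 (z : ℂ) : ℂ := 1 + z + z^2/2 - z^3/6 - z^4/8 + z^5/120
noncomputable def auxD5 (z : ℂ) : ℂ := 1 + z/2 - z^2/2 - 7*z^3/24 + z^4/24 + 31*z^5/720

set_option maxHeartbeats 4000000 in
set_option maxRecDepth 100000 in
theorem auxSOS (x y : ℝ) (h : x^2 + y^2 ≤ 1) :
    (3/50 : ℝ) ≤ (1) + (1/2)*y^2 + (1/24)*y^4 + (1/80)*y^6 + (19/4320)*y^8 + (31/86400)*y^10 + (3/2)*x + (9/8)*x*y^2 + (37/144)*x*y^4 + (-13/576)*x*y^6 + (-29/5760)*x*y^8 + (1/2)*x^2 + (-25/144)*x^2*y^4 + (-7/4320)*x^2*y^6 + (31/17280)*x^2*y^8 + (-17/24)*x^3 + (-43/72)*x^3*y^2 + (1/576)*x^3*y^4 + (-29/1440)*x^3*y^6 + (-17/24)*x^4 + (-1/144)*x^4*y^2 + (-1/32)*x^4*y^4 + (31/8640)*x^4*y^6 + (-23/720)*x^5 +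 (41/576)*x^5*y^2 + (-29/960)*x^5*y^4 + (43/240)*x^6 + (-173/4320)*x^6*y^2 + (31/8640)*x^6*y^4 + (3/64)*x^7 + (-29/1440)*x^7*y^2 + (-2/135)*x^8 + (31/17280)*x^8*y^2 + (-29/5760)*x^9 + (31/86400)*x^10 := by
  have hg : (0:ℝ) ≤ 1 - x^2 - y^2 := by linarith
  have hQ : (0:ℝ) ≤ (53231/102400)*((1) + (15175/53231)*y^2 + (37225/638772)*y^4 + (47950/53231)*x + (21975/53231)*x*y^2 + (90275/479079)*x*y^4 + (1375/212924)*x^2 + (-925/106462)*x^2*y^2 + (-20575/319386)*x^3 + (35275/958158)*x^3*y^2 + (-71225/638772)*x^4 + (11285/958158)*x^5)^2 + (743/4096)*((1)*y + (173/743)*y^3 + (1387/14860)*y^5 + (719/743)*x*y + (627/1486)*x*y^3 + (-1/743)*x^2*y + (-1379/26748)*x^2*y^3 + (50/743)*x^3*y + (847/26748)*x^4*y)^2 + (11033885/218034176)*((7316061/22067770)*y^2 + (14764213/66203310)*y^4 + (1)*x + (926731/22067770)*x*y^2 + (-18404933/99304965)*x*y^4 + (-1957397/22067770)*x^2 + (-195202/2206777)*x^2*y^2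 + (-6458227/33101655)*x^3 + (8516111/198609930)*x^3*y^2 + (1161376/6620331)*x^4 + (-130101091/993049650)*x^5)^2 + (7621104199/180779171840)*((1)*y^2 + (11691648752/22863312597)*y^4 + (332355879/7621104199)*x*y^2 + (-236812316/7621104199)*x*y^4 + (-2088688498/7621104199)*x^2 + (-2058807450/7621104199)*x^2*y^2 + (531041354/22863312597)*x^3 + (15794246579/68589937791)*x^3*y^2 + (402104005/1344900741)*x^4 + (-44425543129/342949688955)*x^5)^2 + (325025/6086656)*((81861/325025)*y^3 + (451597/3250250)*y^5 + (1)*x*y + (26936/325025)*x*y^3 + (-27539/325025)*x^2*y + (991501/5850450)*x^2*y^3 + (64069/325025)*x^3*y + (-194399/5850450)*x^4*y)^2 + (13999707534387/499456684785664)*((-7865213572067/41999122603161)*y^4 + (2031433271336/13999707534387)*x*y^2 + (5864315952196/41999122603161)*x*y^4 + (1)*x^2 + (4537136259982/13999707534387)*x^2*y^2 + (11668644359698/41999122603161)*x^3 + (197066142298/125997367809483)*x^3*y^2 + (-11008128979889/41999122603161)*x^4 + (-8451478007338/125997367809483)*x^5)^2 + (58291339/1331302400)*((1)*y^3 + (1992595381/15738661530)*y^5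 + (-6195186/58291339)*x*y^3 + (-23596686/58291339)*x^2*y + (316433759/6295464612)*x^2*y^3 + (36077137/116582678)*x^3*y + (-771062777/2098488204)*x^4*y)^2 + (1757200145628137/57342802060849152)*((592324945514872/5271600436884411)*y^4 + (1)*x*y^2 + (1360235796561491/5271600436884411)*x*y^4 + (182588868820159/1757200145628137)*x^2*y^2 + (1470829477192288/5271600436884411)*x^3 + (-215782642203355/4518514660186638)*x^3*y^2 + (-373826220768590/5271600436884411)*x^4 + (-9219308414298523/79074006553266165)*x^5)^2 + (1191618333/29845165568)*((-4511806511/35748549990)*y^5 + (2025152633/9532946664)*x*y^3 + (1)*x^2*y + (30104509243/857965199760)*x^2*y^3 + (15177523/529608148)*x^3*y + (24384510413/171593039952)*x^4*y)^2 + (4366371217907181773/129554852336871284736)*((648411061932884708/4366371217907181773)*y^4 + (330780450045514765/13099113653721545319)*x*y^4 + (674904882171766440/4366371217907181773)*x^2*y^2 + (1)*x^3 + (-96511181496777656/13099113653721545319)*x^3*y^2 + (14069237999625128/4366371217907181773)*x^4 + (-63027022200834083993/196486704805823179785)*x^5)^2 + (1105998880189733444777/35769313017095633084416)*((1)*y^4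 + (-3550886514313029689354/49769949608538005014965)*x*y^4 + (-123522543215411886178/1105998880189733444777)*x^2*y^2 + (2644813057503688351459/49769949608538005014965)*x^3*y^2 + (206305055341344279156/1105998880189733444777)*x^4 + (-1379761676105331858742/9953989921707601002993)*x^5)^2 + (1375737325523/39046949535744)*((1218023167807/20636059882845)*y^5 + (1)*x*y^3 + (-19450396487243/123816359297070)*x^2*y^3 + (-255170504250/1375737325523)*x^3*y + (3472081390067/24763271859414)*x^4*y)^2 + (240718050130106568145885/9060342826514296379613184)*((-196135832635145134915519/10832312255854795566564825)*x*y^4 + (1)*x^2*y^2 + (-330241589751191492035891/10832312255854795566564825)*x^3*y^2 + (-23563025473237341857407/240718050130106568145885)*x^4 + (-2858114141753400145981402/32496936767564386699694475)*x^5)^2 + (772409742879175/22540080341368832)*((5191046603537759/104275315288688625)*y^5 + (23939068877717051/208550630577377250)*x^2*y^3 + (1)*x^3*y + (-795816594231661/2780675074365030)*x^4*y)^2 + (2745490024661889719205433/123247641666614562890693120)*((-28739504334787556823679971/219639201972951177536434640)*x*y^4 + (3664847191334455561622377/988376408878280298913955880)*x^3*y^2 + (1)*x^4 + (-20763700543361443241158591/2965129226634840896741867640)*x^5)^2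 + (29830955329401328754987/922561253472532193280000)*((1)*y^5 + (1513136877877255688434/29830955329401328754987)*x^2*y^3 + (1349949233229967714950/29830955329401328754987)*x^4*y)^2 + (22271046055566522803132481605267/728710158737778498783281391206400)*((1)*x*y^4 + (3224273677036235967277858806958/22271046055566522803132481605267)*x^3*y^2 + (9395985105919932715759246014182/66813138166699568409397444815801)*x^5)^2 + (28835501632733560052638168903/989719503536745524901456691200)*((1)*x^2*y^3 + (586507039800660291660835870/28835501632733560052638168903)*x^4*y)^2 + (874550761364260958856004623051397769/29555994304526554678128328868276256768)*((1)*x^3*y^2 + (140626670060819932622894517712348797/4372753806821304794280023115256988845)*x^5)^2 + (479103516539093366234714958217645/12755903186269079493365441501282304)*((1)*x^4*y)^2 + (2102020014637271281591001975080018114220393/87046486020716713165622936945250163862323200)*((1)*x^5)^2 := by positivity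
  have hT : (0:ℝ) ≤ (1721/4096)*((1) + (1123/3442)*y^2 + (157/1721)*y^4 + (1154/1721)*x + (811/3442)*x*y^2 + (571/3442)*x^2 + (37/1721)*x^2*y^2 + (-521/3442)*x^3 + (-203/3442)*x^4)^2 + (689/4096)*((1)*y + (168/689)*y^3 + (30/53)*x*y + (98/689)*x*y^3 + (11/1378)*x^2*y + (-103/1378)*x^3*y)^2 + (1589159/14098432)*((249516/1589159)*y^2 + (7659/1589159)*y^4 + (1)*x + (206850/1589159)*x*y^2 + (-290640/1589159)*x^2 + (-267822/1589159)*x^2*y^2 + (-157727/1589159)*x^3 + (-91007/1589159)*x^4)^2 + (1115086657/26036781056)*((1)*y^2 + (384113766/1115086657)*y^4 + (-204910645/1115086657)*x*y^2 + (-352096545/1115086657)*x^2 + (-294660008/1115086657)*x^2*y^2 + (-170442743/1115086657)*x^3 + (112939493/1115086657)*x^4)^2 + (11779/217088)*((467/23558)*y^3 + (1)*x*y + (1141/11779)*x*y^3 + (-3457/23558)*x^2*y + (1235/23558)*x^3*y)^2 + (317141606529/9134789894144)*((-4370684224/28831055139)*y^4 + (21282672238/317141606529)*x*y^2 + (1)*x^2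 + (46821514565/317141606529)*x^2*y^2 + (15512774758/105713868843)*x^3 + (12349603888/105713868843)*x^4)^2 + (95519979/2508832768)*((1)*y^3 + (-5709962/95519979)*x*y^3 + (-17881907/95519979)*x^2*y + (7549999/95519979)*x^3*y)^2 + (41567807960617/1299012020342784)*((2622486153661/41567807960617)*y^4 + (1)*x*y^2 + (5068862824514/41567807960617)*x^2*y^2 + (26015555200281/83135615921234)*x^3 + (-6182057447916/41567807960617)*x^4)^2 + (53951556323/1564999335936)*((5590469924/53951556323)*x*y^3 + (1)*x^2*y + (23382239/7707365189)*x^3*y)^2 + (30598149083651705/681046965626748928)*((591839911469100/6119629816730341)*y^4 + (2362715023982668/30598149083651705)*x^2*y^2 + (1)*x^3 + (-2595480500214876/30598149083651705)*x^4)^2 + (1313767566456180227/50132007458654953472)*((1)*y^4 + (-100759501164569948/1313767566456180227)*x^2*y^2 + (24778115925892108/1313767566456180227)*x^4)^2 + (2910744973947/110492787349504)*((1)*x*y^3 + (-1144963591667/11642979895788)*x^3*y)^2 + (80932022258191023903/3363244970127821381120)*((1)*x^2*y^2 + (-30203122414743941331/215818726021842730408)*x^4)^2 + (2201005743622273/95379291306295296)*((1)*x^3*y)^2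 + (23538850565380567127203/883993501785467823751168)*((1)*x^4)^2 := by positivity
  have hgT := mul_nonneg hg hT
  have key : ((1) + (1/2)*y^2 + (1/24)*y^4 + (1/80)*y^6 + (19/4320)*y^8 + (31/86400)*y^10 + (3/2)*x + (9/8)*x*y^2 + (37/144)*x*y^4 + (-13/576)*x*y^6 + (-29/5760)*x*y^8 + (1/2)*x^2 + (-25/144)*x^2*y^4 + (-7/4320)*x^2*y^6 + (31/17280)*x^2*y^8 + (-17/24)*x^3 + (-43/72)*x^3*y^2 + (1/576)*x^3*y^4 + (-29/1440)*x^3*y^6 + (-17/24)*x^4 + (-1/144)*x^4*y^2 + (-1/32)*x^4*y^4 + (31/8640)*x^4*y^6 + (-23/720)*x^5 + (41/576)*x^5*y^2 + (-29/960)*x^5*y^4 + (43/240)*x^6 + (-173/4320)*x^6*y^2 + (31/8640)*x^6*y^4 + (3/64)*x^7 + (-29/1440)*x^7*y^2 + (-2/135)*x^8 + (31/17280)*x^8*y^2 + (-29/5760)*x^9 + (31/86400)*x^10) - 3/50 = ((53231/102400)*((1) + (15175/53231)*y^2 + (37225/638772)*y^4 + (47950/53231)*x + (21975/53231)*x*y^2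 + (90275/479079)*x*y^4 + (1375/212924)*x^2 + (-925/106462)*x^2*y^2 + (-20575/319386)*x^3 + (35275/958158)*x^3*y^2 + (-71225/638772)*x^4 + (11285/958158)*x^5)^2 + (743/4096)*((1)*y + (173/743)*y^3 + (1387/14860)*y^5 + (719/743)*x*y + (627/1486)*x*y^3 + (-1/743)*x^2*y + (-1379/26748)*x^2*y^3 + (50/743)*x^3*y + (847/26748)*x^4*y)^2 + (11033885/218034176)*((7316061/22067770)*y^2 + (14764213/66203310)*y^4 + (1)*x + (926731/22067770)*x*y^2 + (-18404933/99304965)*x*y^4 + (-1957397/22067770)*x^2 + (-195202/2206777)*x^2*y^2 + (-6458227/33101655)*x^3 + (8516111/198609930)*x^3*y^2 + (1161376/6620331)*x^4 + (-130101091/993049650)*x^5)^2 + (7621104199/180779171840)*((1)*y^2 + (11691648752/22863312597)*y^4 + (332355879/7621104199)*x*y^2 + (-236812316/7621104199)*x*y^4 + (-2088688498/7621104199)*x^2 + (-2058807450/7621104199)*x^2*y^2 + (531041354/22863312597)*x^3 + (15794246579/68589937791)*x^3*y^2 + (402104005/1344900741)*x^4 + (-44425543129/342949688955)*x^5)^2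 + (325025/6086656)*((81861/325025)*y^3 + (451597/3250250)*y^5 + (1)*x*y + (26936/325025)*x*y^3 + (-27539/325025)*x^2*y + (991501/5850450)*x^2*y^3 + (64069/325025)*x^3*y + (-194399/5850450)*x^4*y)^2 + (13999707534387/499456684785664)*((-7865213572067/41999122603161)*y^4 + (2031433271336/13999707534387)*x*y^2 + (5864315952196/41999122603161)*x*y^4 + (1)*x^2 + (4537136259982/13999707534387)*x^2*y^2 + (11668644359698/41999122603161)*x^3 + (197066142298/125997367809483)*x^3*y^2 + (-11008128979889/41999122603161)*x^4 + (-8451478007338/125997367809483)*x^5)^2 + (58291339/1331302400)*((1)*y^3 + (1992595381/15738661530)*y^5 + (-6195186/58291339)*x*y^3 + (-23596686/58291339)*x^2*y + (316433759/6295464612)*x^2*y^3 + (36077137/116582678)*x^3*y + (-771062777/2098488204)*x^4*y)^2 + (1757200145628137/57342802060849152)*((592324945514872/5271600436884411)*y^4 + (1)*x*y^2 + (1360235796561491/5271600436884411)*x*y^4 + (182588868820159/1757200145628137)*x^2*y^2 + (1470829477192288/5271600436884411)*x^3 + (-215782642203355/4518514660186638)*x^3*y^2 + (-373826220768590/5271600436884411)*x^4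 + (-9219308414298523/79074006553266165)*x^5)^2 + (1191618333/29845165568)*((-4511806511/35748549990)*y^5 + (2025152633/9532946664)*x*y^3 + (1)*x^2*y + (30104509243/857965199760)*x^2*y^3 + (15177523/529608148)*x^3*y + (24384510413/171593039952)*x^4*y)^2 + (4366371217907181773/129554852336871284736)*((648411061932884708/4366371217907181773)*y^4 + (330780450045514765/13099113653721545319)*x*y^4 + (674904882171766440/4366371217907181773)*x^2*y^2 + (1)*x^3 + (-96511181496777656/13099113653721545319)*x^3*y^2 + (14069237999625128/4366371217907181773)*x^4 + (-63027022200834083993/196486704805823179785)*x^5)^2 + (1105998880189733444777/35769313017095633084416)*((1)*y^4 + (-3550886514313029689354/49769949608538005014965)*x*y^4 + (-123522543215411886178/1105998880189733444777)*x^2*y^2 + (2644813057503688351459/49769949608538005014965)*x^3*y^2 + (206305055341344279156/1105998880189733444777)*x^4 + (-1379761676105331858742/9953989921707601002993)*x^5)^2 + (1375737325523/39046949535744)*((1218023167807/20636059882845)*y^5 + (1)*x*y^3 + (-19450396487243/123816359297070)*x^2*y^3 + (-255170504250/1375737325523)*x^3*y + (3472081390067/24763271859414)*x^4*y)^2 +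 (240718050130106568145885/9060342826514296379613184)*((-196135832635145134915519/10832312255854795566564825)*x*y^4 + (1)*x^2*y^2 + (-330241589751191492035891/10832312255854795566564825)*x^3*y^2 + (-23563025473237341857407/240718050130106568145885)*x^4 + (-2858114141753400145981402/32496936767564386699694475)*x^5)^2 + (772409742879175/22540080341368832)*((5191046603537759/104275315288688625)*y^5 + (23939068877717051/208550630577377250)*x^2*y^3 + (1)*x^3*y + (-795816594231661/2780675074365030)*x^4*y)^2 + (2745490024661889719205433/123247641666614562890693120)*((-28739504334787556823679971/219639201972951177536434640)*x*y^4 + (3664847191334455561622377/988376408878280298913955880)*x^3*y^2 + (1)*x^4 + (-20763700543361443241158591/2965129226634840896741867640)*x^5)^2 + (29830955329401328754987/922561253472532193280000)*((1)*y^5 + (1513136877877255688434/29830955329401328754987)*x^2*y^3 + (1349949233229967714950/29830955329401328754987)*x^4*y)^2 + (22271046055566522803132481605267/728710158737778498783281391206400)*((1)*x*y^4 + (3224273677036235967277858806958/22271046055566522803132481605267)*x^3*y^2 + (9395985105919932715759246014182/66813138166699568409397444815801)*x^5)^2 + (28835501632733560052638168903/989719503536745524901456691200)*((1)*x^2*y^3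 + (586507039800660291660835870/28835501632733560052638168903)*x^4*y)^2 + (874550761364260958856004623051397769/29555994304526554678128328868276256768)*((1)*x^3*y^2 + (140626670060819932622894517712348797/4372753806821304794280023115256988845)*x^5)^2 + (479103516539093366234714958217645/12755903186269079493365441501282304)*((1)*x^4*y)^2 + (2102020014637271281591001975080018114220393/87046486020716713165622936945250163862323200)*((1)*x^5)^2) + (1 - x^2 - y^2) * ((1721/4096)*((1) + (1123/3442)*y^2 + (157/1721)*y^4 + (1154/1721)*x + (811/3442)*x*y^2 + (571/3442)*x^2 + (37/1721)*x^2*y^2 + (-521/3442)*x^3 + (-203/3442)*x^4)^2 + (689/4096)*((1)*y + (168/689)*y^3 + (30/53)*x*y + (98/689)*x*y^3 + (11/1378)*x^2*y + (-103/1378)*x^3*y)^2 + (1589159/14098432)*((249516/1589159)*y^2 + (7659/1589159)*y^4 + (1)*x + (206850/1589159)*x*y^2 + (-290640/1589159)*x^2 + (-267822/1589159)*x^2*y^2 + (-157727/1589159)*x^3 + (-91007/1589159)*x^4)^2 + (1115086657/26036781056)*((1)*y^2 + (384113766/1115086657)*y^4 + (-204910645/1115086657)*x*y^2 + (-352096545/1115086657)*x^2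 + (-294660008/1115086657)*x^2*y^2 + (-170442743/1115086657)*x^3 + (112939493/1115086657)*x^4)^2 + (11779/217088)*((467/23558)*y^3 + (1)*x*y + (1141/11779)*x*y^3 + (-3457/23558)*x^2*y + (1235/23558)*x^3*y)^2 + (317141606529/9134789894144)*((-4370684224/28831055139)*y^4 + (21282672238/317141606529)*x*y^2 + (1)*x^2 + (46821514565/317141606529)*x^2*y^2 + (15512774758/105713868843)*x^3 + (12349603888/105713868843)*x^4)^2 + (95519979/2508832768)*((1)*y^3 + (-5709962/95519979)*x*y^3 + (-17881907/95519979)*x^2*y + (7549999/95519979)*x^3*y)^2 + (41567807960617/1299012020342784)*((2622486153661/41567807960617)*y^4 + (1)*x*y^2 + (5068862824514/41567807960617)*x^2*y^2 + (26015555200281/83135615921234)*x^3 + (-6182057447916/41567807960617)*x^4)^2 + (53951556323/1564999335936)*((5590469924/53951556323)*x*y^3 + (1)*x^2*y + (23382239/7707365189)*x^3*y)^2 + (30598149083651705/681046965626748928)*((591839911469100/6119629816730341)*y^4 + (2362715023982668/30598149083651705)*x^2*y^2 + (1)*x^3 + (-2595480500214876/30598149083651705)*x^4)^2 + (1313767566456180227/50132007458654953472)*((1)*y^4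 + (-100759501164569948/1313767566456180227)*x^2*y^2 + (24778115925892108/1313767566456180227)*x^4)^2 + (2910744973947/110492787349504)*((1)*x*y^3 + (-1144963591667/11642979895788)*x^3*y)^2 + (80932022258191023903/3363244970127821381120)*((1)*x^2*y^2 + (-30203122414743941331/215818726021842730408)*x^4)^2 + (2201005743622273/95379291306295296)*((1)*x^3*y)^2 + (23538850565380567127203/883993501785467823751168)*((1)*x^4)^2) := by ring
  linarith [hQ, hgT, key]

set_option maxHeartbeats 1000000 in
theorem auxN5eval (x y : ℝ) : auxN5 (x + y*I) = ⟨(1) + (-1/2)*y^2 + (-1/8)*y^4 + (1)*x + (1/2)*x*y^2 + (1/24)*x*y^4 + (1/2)*x^2 + (3/4)*x^2*y^2 + (-1/6)*x^3 + (-1/12)*x^3*y^2 + (-1/8)*x^4 + (1/120)*x^5, (1)*y + (1/6)*y^3 + (1/120)*y^5 + (1)*x*y + (1/2)*x*y^3 + (-1/2)*x^2*y + (-1/12)*x^2*y^3 + (-1/2)*x^3*y + (1/24)*x^4*y⟩ := by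
  have hz : (x:ℂ) + y*I = ⟨x, y⟩ := by apply Complex.ext <;> simp
  rw [auxN5, hz]
  apply Complex.ext <;>
    simp [pow_succ, Complex.mul_re, Complex.mul_im, Complex.div_re, Complex.div_im,
      Complex.normSq_apply] <;> ring

set_option maxHeartbeats 1000000 in
theorem auxD5eval (x y : ℝ) : auxD5 (x + y*I) = ⟨(1) + (1/2)*y^2 + (1/24)*y^4 + (1/2)*x + (7/8)*x*y^2 + (31/144)*x*y^4 + (-1/2)*x^2 + (-1/4)*x^2*y^2 + (-7/24)*x^3 + (-31/72)*x^3*y^2 + (1/24)*x^4 + (31/720)*x^5, (1/2)*y + (7/24)*y^3 + (31/720)*y^5 + (-1)*x*y + (-1/6)*x*y^3 + (-7/8)*x^2*y + (-31/72)*x^2*y^3 + (1/6)*x^3*y + (31/144)*x^4*y⟩ := by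
  have hz : (x:ℂ) + y*I = ⟨x, y⟩ := by apply Complex.ext <;> simp
  rw [auxD5, hz]
  apply Complex.ext <;>
    simp [pow_succ, Complex.mul_re, Complex.mul_im, Complex.div_re, Complex.div_im,
      Complex.normSq_apply] <;> ring

set_option maxHeartbeats 2000000 in
set_option maxRecDepth 100000 in
theorem auxReEval (x y : ℝ) (h : x^2 + y^2 ≤ 1) :
    (3/50 : ℝ) ≤ (auxN5 (x + y*I) * (starRingEnd ℂ) (auxD5 (x + y*I))).re := by
  rw [auxN5eval, auxD5eval]
  have h2 := auxSOS x y h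
  rw [Complex.mul_re]
  simp only [Complex.conj_re, Complex.conj_im]
  have hid : ((1) + (-1/2)*y^2 + (-1/8)*y^4 + (1)*x + (1/2)*x*y^2 + (1/24)*x*y^4 + (1/2)*x^2 + (3/4)*x^2*y^2 + (-1/6)*x^3 + (-1/12)*x^3*y^2 + (-1/8)*x^4 + (1/120)*x^5) * ((1) + (1/2)*y^2 + (1/24)*y^4 + (1/2)*x + (7/8)*x*y^2 + (31/144)*x*y^4 + (-1/2)*x^2 + (-1/4)*x^2*y^2 + (-7/24)*x^3 + (-31/72)*x^3*y^2 + (1/24)*x^4 + (31/720)*x^5) - ((1)*y + (1/6)*y^3 + (1/120)*y^5 + (1)*x*y + (1/2)*x*y^3 + (-1/2)*x^2*y + (-1/12)*x^2*y^3 + (-1/2)*x^3*y + (1/24)*x^4*y) * -((1/2)*y + (7/24)*y^3 + (31/720)*y^5 + (-1)*x*y + (-1/6)*x*y^3 + (-7/8)*x^2*y + (-31/72)*x^2*y^3 + (1/6)*x^3*y + (31/144)*x^4*y) = (1) + (1/2)*y^2 + (1/24)*y^4 + (1/80)*y^6 + (19/4320)*y^8 + (31/86400)*y^10 + (3/2)*x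 + (9/8)*x*y^2 + (37/144)*x*y^4 + (-13/576)*x*y^6 + (-29/5760)*x*y^8 + (1/2)*x^2 + (-25/144)*x^2*y^4 + (-7/4320)*x^2*y^6 + (31/17280)*x^2*y^8 + (-17/24)*x^3 + (-43/72)*x^3*y^2 + (1/576)*x^3*y^4 + (-29/1440)*x^3*y^6 + (-17/24)*x^4 + (-1/144)*x^4*y^2 + (-1/32)*x^4*y^4 + (31/8640)*x^4*y^6 + (-23/720)*x^5 + (41/576)*x^5*y^2 + (-29/960)*x^5*y^4 + (43/240)*x^6 + (-173/4320)*x^6*y^2 + (31/8640)*x^6*y^4 + (3/64)*x^7 + (-29/1440)*x^7*y^2 + (-2/135)*x^8 + (31/17280)*x^8*y^2 + (-29/5760)*x^9 + (31/86400)*x^10 := by ring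
  rw [hid]
  exact h2

theorem auxCosBound (z : ℂ) (hz : Complex.abs z ≤ 1) :
    Complex.abs (Complex.cos z - (1 - z^2/2 + z^4/24)) ≤ 7/4320 * Complex.abs z ^ 6 := by
  have hzi : Complex.abs (z * I) ≤ 1 := by rwa [map_mul, Complex.abs_I, mul_one]
  have hzi' : Complex.abs (-z * I) ≤ 1 := by
    rwa [map_mul, map_neg_eq_map, Complex.abs_I, mul_one]
  have h1 := Complex.exp_bound hzi (n := 6) (by norm_num)
  have h2 := Complex.exp_bound hzi' (n := 6) (by norm_num)
  have hsum : (∑ m ∈ Finset.range 6, (z*I)^m/m.factorial)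
      + (∑ m ∈ Finset.range 6, (-z*I)^m/m.factorial) = 2*(1 - z^2/2 + z^4/24) := by
    have hI2 : (I:ℂ)^2 = -1 := Complex.I_sq
    have hI3 : (I:ℂ)^3 = -I := by rw [pow_succ, hI2]; ring
    have hI4 : (I:ℂ)^4 = 1 := by rw [(by ring : (I:ℂ)^4 = (I^2)^2), hI2]; ring
    have hI5 : (I:ℂ)^5 = I := by rw [pow_succ, hI4]; ring
    have hI6 : (I:ℂ)^6 = -1 := by rw [pow_succ, hI5, ← hI2]; ring
    have hI7 : (I:ℂ)^7 = -I := by rw [pow_succ, hI6]; ring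
    simp [Finset.sum_range_succ, Nat.factorial]
    ring_nf
    simp [hI2, hI3, hI4, hI5, hI6, hI7]
    ring_nf
  have hcos : Complex.cos z - (1 - z^2/2 + z^4/24) =
      ((Complex.exp (z*I) - ∑ m ∈ Finset.range 6, (z*I)^m/m.factorial)
       + (Complex.exp (-z*I) - ∑ m ∈ Finset.range 6, (-z*I)^m/m.factorial))/2 := by
    have hc : Complex.cos z = (Complex.exp (z*I) + Complex.exp (-z*I))/2 := rfl
    rw [hc]
    linear_combination hsum / 2
  simp only [Complex.norm_eq_abs] at h1 h2
  rw [map_mul, Complex.abs_I, mul_one] at h1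
  rw [map_mul, map_neg_eq_map, Complex.abs_I, mul_one] at h2
  replace h1 := h1.trans_eq (show Complex.abs z ^ 6 * (((6:ℕ).succ : ℝ)
    * (((6:ℕ).factorial : ℝ) * ((6:ℕ):ℝ))⁻¹) = 7/4320 * Complex.abs z ^ 6 by
    norm_num [Nat.factorial]; ring)
  replace h2 := h2.trans_eq (show Complex.abs z ^ 6 * (((6:ℕ).succ : ℝ)
    * (((6:ℕ).factorial : ℝ) * ((6:ℕ):ℝ))⁻¹) = 7/4320 * Complex.abs z ^ 6 by
    norm_num [Nat.factorial]; ring)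
  calc Complex.abs (Complex.cos z - (1 - z^2/2 + z^4/24))
      = Complex.abs ((Complex.exp (z*I) - ∑ m ∈ Finset.range 6, (z*I)^m/m.factorial)
       + (Complex.exp (-z*I) - ∑ m ∈ Finset.range 6, (-z*I)^m/m.factorial)) / 2 := by
        rw [hcos, map_div₀, Complex.abs_two]
    _ ≤ (Complex.abs (Complex.exp (z*I) - ∑ m ∈ Finset.range 6, (z*I)^m/m.factorial)
       + Complex.abs (Complex.exp (-z*I) - ∑ m ∈ Finset.range 6, (-z*I)^m/m.factorial)) / 2 := by
        gcongr
        exact Complex.abs.add_le _ _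
    _ ≤ 7/4320 * Complex.abs z ^ 6 := by linarith

theorem auxSinBound (z : ℂ) (hz : Complex.abs z ≤ 1) :
    Complex.abs (Complex.sin z - (z - z^3/6 + z^5/120)) ≤ 1/4410 * Complex.abs z ^ 7 := by
  have hzi : Complex.abs (z * I) ≤ 1 := by rwa [map_mul, Complex.abs_I, mul_one]
  have hzi' : Complex.abs (-z * I) ≤ 1 := by
    rwa [map_mul, map_neg_eq_map, Complex.abs_I, mul_one]
  have h1 := Complex.exp_bound hzi (n := 7) (by norm_num)
  have h2 := Complex.exp_bound hzi' (n := 7) (by norm_num)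
  have hsum : ((∑ m ∈ Finset.range 7, (-z*I)^m/m.factorial)
      - (∑ m ∈ Finset.range 7, (z*I)^m/m.factorial)) * I / 2 = z - z^3/6 + z^5/120 := by
    have hI2 : (I:ℂ)^2 = -1 := Complex.I_sq
    have hI3 : (I:ℂ)^3 = -I := by rw [pow_succ, hI2]; ring
    have hI4 : (I:ℂ)^4 = 1 := by rw [(by ring : (I:ℂ)^4 = (I^2)^2), hI2]; ring
    have hI5 : (I:ℂ)^5 = I := by rw [pow_succ, hI4]; ring
    have hI6 : (I:ℂ)^6 = -1 := by rw [pow_succ, hI5, ← hI2]; ring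
    have hI7 : (I:ℂ)^7 = -I := by rw [pow_succ, hI6]; ring
    simp [Finset.sum_range_succ, Nat.factorial]
    ring_nf
    simp [hI2, hI3, hI4, hI5, hI6, hI7]
    ring_nf

  have hsin : Complex.sin z - (z - z^3/6 + z^5/120) =
      ((Complex.exp (-z*I) - ∑ m ∈ Finset.range 7, (-z*I)^m/m.factorial)
       - (Complex.exp (z*I) - ∑ m ∈ Finset.range 7, (z*I)^m/m.factorial)) * I / 2 := by
    have hc : Complex.sin z = (Complex.exp (-z*I) - Complex.exp (z*I)) * I / 2 := rfl
    rw [hc]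
    linear_combination hsum
  simp only [Complex.norm_eq_abs] at h1 h2
  rw [map_mul, Complex.abs_I, mul_one] at h1
  rw [map_mul, map_neg_eq_map, Complex.abs_I, mul_one] at h2
  replace h1 := h1.trans_eq (show Complex.abs z ^ 7 * (((7:ℕ).succ : ℝ)
    * (((7:ℕ).factorial : ℝ) * ((7:ℕ):ℝ))⁻¹) = 1/4410 * Complex.abs z ^ 7 by
    norm_num [Nat.factorial]; ring)
  replace h2 := h2.trans_eq (show Complex.abs z ^ 7 * (((7:ℕ).succ : ℝ)
    * (((7:ℕ).factorial : ℝ) * ((7:ℕ):ℝ))⁻¹) = 1/4410 * Complex.abs z ^ 7 by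
    norm_num [Nat.factorial]; ring)
  calc Complex.abs (Complex.sin z - (z - z^3/6 + z^5/120))
      = Complex.abs ((Complex.exp (-z*I) - ∑ m ∈ Finset.range 7, (-z*I)^m/m.factorial)
       - (Complex.exp (z*I) - ∑ m ∈ Finset.range 7, (z*I)^m/m.factorial)) / 2 := by
        rw [hsin, map_div₀, map_mul, Complex.abs_I, mul_one, Complex.abs_two]
    _ ≤ (Complex.abs (Complex.exp (-z*I) - ∑ m ∈ Finset.range 7, (-z*I)^m/m.factorial)
       + Complex.abs (Complex.exp (z*I) - ∑ m ∈ Finset.range 7, (z*I)^m/m.factorial)) / 2 := by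
        gcongr
        exact Complex.abs.sub_le_add _ _
    _ ≤ 1/4410 * Complex.abs z ^ 7 := by linarith

theorem auxCosNe (z : ℂ) (h : Complex.abs z ≤ 1) : Complex.cos z ≠ 0 := by
  intro h0
  rw [Complex.cos_eq_zero_iff] at h0
  obtain ⟨k, hk⟩ := h0
  have hcast : z = (((2*k+1 : ℤ) : ℝ) * (Real.pi/2) : ℝ) := by
    rw [hk]; push_cast; ring
  have habs : Complex.abs z = |((2*k+1 : ℤ) : ℝ)| * (Real.pi/2) := by
    rw [hcast, Complex.abs_ofReal, abs_mul]
    rw [abs_of_pos (by positivity : (0:ℝ) < Real.pi/2)]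
  have hone : (1:ℝ) ≤ |((2*k+1 : ℤ) : ℝ)| := by
    have hne : (2*k+1 : ℤ) ≠ 0 := by omega
    have := Int.one_le_abs hne
    calc (1:ℝ) = ((1:ℤ):ℝ) := by norm_num
      _ ≤ ((|2*k+1| : ℤ) : ℝ) := by exact_mod_cast this
      _ = |((2*k+1 : ℤ) : ℝ)| := by push_cast; ring
  have hpi : (3:ℝ) < Real.pi := Real.pi_gt_three
  have : (3/2 : ℝ) ≤ Complex.abs z := by
    rw [habs]
    nlinarith
  linarith

set_option maxHeartbeats 1000000 in
theorem auxCore (z : ℂ) (hz : Complex.abs z ≤ 1) (h0 : z ≠ 0) :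
    0 < ((Complex.cos z + (1+z)*Complex.sin z) *
      (starRingEnd ℂ) (Complex.cos z * (1 + z - Complex.cos z)/z)).re := by
  have ha0 : (0:ℝ) < Complex.abs z := Complex.abs.pos h0
  have hab : (0:ℝ) ≤ Complex.abs z := ha0.le
  have hpow : ∀ k : ℕ, Complex.abs z ^ k ≤ 1 := fun k => pow_le_one₀ hab hz
  have habsk : ∀ k : ℕ, Complex.abs (z^k) ≤ 1 := fun k => by
    rw [map_pow]; exact hpow k
  have hec := auxCosBound z hz
  have hes := auxSinBound z hz
  have h1z : Complex.abs (1+z) ≤ 2 := by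
    calc Complex.abs (1+z) ≤ Complex.abs 1 + Complex.abs z := Complex.abs.add_le _ _
      _ ≤ 2 := by rw [map_one]; linarith
  -- N part
  have hNid : (Complex.cos z + (1+z)*Complex.sin z) - auxN5 z
      = (Complex.cos z - (1 - z^2/2 + z^4/24))
        + (1+z)*(Complex.sin z - (z - z^3/6 + z^5/120)) + z^6/120 := by
    rw [auxN5]; ring
  have hN : Complex.abs ((Complex.cos z + (1+z)*Complex.sin z) - auxN5 z) ≤ 21/2000 := by
    rw [hNid]
    calc Complex.abs _
        ≤ Complex.abs ((Complex.cos z - (1 - z^2/2 + z^4/24))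
            + (1+z)*(Complex.sin z - (z - z^3/6 + z^5/120))) + Complex.abs (z^6/120) :=
          Complex.abs.add_le _ _
      _ ≤ Complex.abs (Complex.cos z - (1 - z^2/2 + z^4/24))
            + Complex.abs ((1+z)*(Complex.sin z - (z - z^3/6 + z^5/120)))
            + Complex.abs (z^6/120) := by
          have := Complex.abs.add_le (Complex.cos z - (1 - z^2/2 + z^4/24))
            ((1+z)*(Complex.sin z - (z - z^3/6 + z^5/120)))
          linarith
      _ ≤ 7/4320 * Complex.abs z ^ 6
            + 2 * (1/4410 * Complex.abs z ^ 7) + 1/120 := by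
          have hm : Complex.abs ((1+z)*(Complex.sin z - (z - z^3/6 + z^5/120)))
              ≤ 2 * (1/4410 * Complex.abs z ^ 7) := by
            rw [map_mul]
            exact mul_le_mul h1z hes (Complex.abs.nonneg _) (by norm_num)
          have hz6 : Complex.abs (z^6/120) ≤ 1/120 := by
            rw [map_div₀, map_pow]
            simp only [Complex.abs_ofNat]
            have h6 := hpow 6
            gcongr
          linarith
      _ ≤ 21/2000 := by
          have h6 := hpow 6
          have h7 := hpow 7
          nlinarith
  -- D part
  have hDid : (Complex.cos z * (1 + z - Complex.cos z)/z) - auxD5 z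
      = (-z^5/720 - z^7/576)
        + ((Complex.cos z - (1 - z^2/2 + z^4/24))/z)
          * ((1 + z - (1 - z^2/2 + z^4/24)) - Complex.cos z) := by
    rw [auxD5]; field_simp; ring
  have hecz : Complex.abs ((Complex.cos z - (1 - z^2/2 + z^4/24))/z) ≤ 7/4320 := by
    rw [map_div₀, div_le_iff₀ ha0]
    calc Complex.abs (Complex.cos z - (1 - z^2/2 + z^4/24)) ≤ 7/4320 * Complex.abs z ^ 6 := hec
      _ ≤ 7/4320 * Complex.abs z := by
          have : Complex.abs z ^ 6 ≤ Complex.abs z ^ 1 :=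
            pow_le_pow_of_le_one hab hz (by norm_num)
          simpa using by nlinarith [this]
  have hC5 : Complex.abs (1 - z^2/2 + z^4/24) ≤ 37/24 := by
    calc Complex.abs (1 - z^2/2 + z^4/24)
        ≤ Complex.abs (1 - z^2/2) + Complex.abs (z^4/24) := Complex.abs.add_le _ _
      _ ≤ Complex.abs 1 + Complex.abs (z^2/2) + Complex.abs (z^4/24) := by
          have := Complex.abs.sub_le_add (1:ℂ) (z^2/2)
          linarith
      _ ≤ 1 + 1/2 + 1/24 := by
          rw [map_one, map_div₀, map_div₀, map_pow, map_pow]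
          simp only [Complex.abs_ofNat]
          have h2 := hpow 2
          have h4 := hpow 4
          have e1 : Complex.abs z ^ 2 / (2:ℝ) ≤ 1/2 := by gcongr
          have e2 : Complex.abs z ^ 4 / (24:ℝ) ≤ 1/24 := by gcongr
          linarith
      _ ≤ 37/24 := by norm_num
  have hcosabs : Complex.abs (Complex.cos z) ≤ 37/24 + 7/4320 := by
    calc Complex.abs (Complex.cos z)
        = Complex.abs ((1 - z^2/2 + z^4/24) + (Complex.cos z - (1 - z^2/2 + z^4/24))) := by
          ring_nf
      _ ≤ Complex.abs (1 - z^2/2 + z^4/24)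
          + Complex.abs (Complex.cos z - (1 - z^2/2 + z^4/24)) := Complex.abs.add_le _ _
      _ ≤ 37/24 + 7/4320 := by
          have h6 := hpow 6
          nlinarith [hec, hC5]
  have hbig : Complex.abs ((1 + z - (1 - z^2/2 + z^4/24)) - Complex.cos z)
      ≤ 37/24 + (37/24 + 7/4320) := by
    have hpoly : Complex.abs (1 + z - (1 - z^2/2 + z^4/24)) ≤ 37/24 := by
      have hide : 1 + z - (1 - z^2/2 + z^4/24) = z + z^2/2 - z^4/24 := by ring
      rw [hide]
      calc Complex.abs (z + z^2/2 - z^4/24)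
          ≤ Complex.abs (z + z^2/2) + Complex.abs (z^4/24) := Complex.abs.sub_le_add _ _
        _ ≤ Complex.abs z + Complex.abs (z^2/2) + Complex.abs (z^4/24) := by
            have := Complex.abs.add_le z (z^2/2)
            linarith
        _ ≤ 1 + 1/2 + 1/24 := by
            rw [map_div₀, map_div₀, map_pow, map_pow]
            simp only [Complex.abs_ofNat]
            have h2 := hpow 2
            have h4 := hpow 4
            have e1 : Complex.abs z ^ 2 / (2:ℝ) ≤ 1/2 := by gcongr
            have e2 : Complex.abs z ^ 4 / (24:ℝ) ≤ 1/24 := by gcongr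
            linarith
        _ ≤ 37/24 := by norm_num
    calc Complex.abs ((1 + z - (1 - z^2/2 + z^4/24)) - Complex.cos z)
        ≤ Complex.abs (1 + z - (1 - z^2/2 + z^4/24)) + Complex.abs (Complex.cos z) :=
          Complex.abs.sub_le_add _ _
      _ ≤ 37/24 + (37/24 + 7/4320) := by linarith
  have hD : Complex.abs ((Complex.cos z * (1 + z - Complex.cos z)/z) - auxD5 z) ≤ 1/120 := by
    rw [hDid]
    calc Complex.abs _
        ≤ Complex.abs (-z^5/720 - z^7/576)
          + Complex.abs (((Complex.cos z - (1 - z^2/2 + z^4/24))/z)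
            * ((1 + z - (1 - z^2/2 + z^4/24)) - Complex.cos z)) := Complex.abs.add_le _ _
      _ ≤ (1/720 + 1/576) + (7/4320) * (37/24 + (37/24 + 7/4320)) := by
          have e1 : Complex.abs (-z^5/720 - z^7/576) ≤ 1/720 + 1/576 := by
            calc Complex.abs (-z^5/720 - z^7/576)
                ≤ Complex.abs (-z^5/720) + Complex.abs (z^7/576) := Complex.abs.sub_le_add _ _
              _ ≤ 1/720 + 1/576 := by
                  rw [map_div₀, map_div₀, map_neg_eq_map, map_pow, map_pow]
                  simp only [Complex.abs_ofNat]
                  have h5 := hpow 5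
                  have h7 := hpow 7
                  have e1 : Complex.abs z ^ 5 / (720:ℝ) ≤ 1/720 := by gcongr
                  have e2 : Complex.abs z ^ 7 / (576:ℝ) ≤ 1/576 := by gcongr
                  linarith
          have e2 : Complex.abs (((Complex.cos z - (1 - z^2/2 + z^4/24))/z)
              * ((1 + z - (1 - z^2/2 + z^4/24)) - Complex.cos z))
              ≤ (7/4320) * (37/24 + (37/24 + 7/4320)) := by
            rw [map_mul]
            exact mul_le_mul hecz hbig (Complex.abs.nonneg _) (by norm_num)
          linarith
      _ ≤ 1/120 := by norm_num
  -- bounds on the approximants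
  have hN5abs : Complex.abs (auxN5 z) ≤ 337/120 := by
    rw [auxN5]
    calc Complex.abs (1 + z + z^2/2 - z^3/6 - z^4/8 + z^5/120)
        ≤ Complex.abs (1 + z + z^2/2 - z^3/6 - z^4/8) + Complex.abs (z^5/120) :=
          Complex.abs.add_le _ _
      _ ≤ Complex.abs (1 + z + z^2/2 - z^3/6) + Complex.abs (z^4/8)
            + Complex.abs (z^5/120) := by
          have := Complex.abs.sub_le_add (1 + z + z^2/2 - z^3/6) (z^4/8)
          linarith
      _ ≤ Complex.abs (1 + z + z^2/2) + Complex.abs (z^3/6) + Complex.abs (z^4/8)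
            + Complex.abs (z^5/120) := by
          have := Complex.abs.sub_le_add (1 + z + z^2/2) (z^3/6)
          linarith
      _ ≤ Complex.abs (1 + z) + Complex.abs (z^2/2) + Complex.abs (z^3/6)
            + Complex.abs (z^4/8) + Complex.abs (z^5/120) := by
          have := Complex.abs.add_le (1 + z) (z^2/2)
          linarith
      _ ≤ 2 + 1/2 + 1/6 + 1/8 + 1/120 := by
          rw [map_div₀, map_div₀, map_div₀, map_div₀, map_pow, map_pow, map_pow, map_pow]
          simp only [Complex.abs_ofNat]
          have h2 := hpow 2
          have h3 := hpow 3
          have h4 := hpow 4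
          have h5 := hpow 5
          have e1 : Complex.abs z ^ 2 / (2:ℝ) ≤ 1/2 := by gcongr
          have e2 : Complex.abs z ^ 3 / (6:ℝ) ≤ 1/6 := by gcongr
          have e3 : Complex.abs z ^ 4 / (8:ℝ) ≤ 1/8 := by gcongr
          have e4 : Complex.abs z ^ 5 / (120:ℝ) ≤ 1/120 := by gcongr
          linarith
      _ ≤ 337/120 := by norm_num
  have hD5abs : Complex.abs (auxD5 z) ≤ 1711/720 := by
    rw [auxD5]
    calc Complex.abs (1 + z/2 - z^2/2 - 7*z^3/24 + z^4/24 + 31*z^5/720)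
        ≤ Complex.abs (1 + z/2 - z^2/2 - 7*z^3/24 + z^4/24) + Complex.abs (31*z^5/720) :=
          Complex.abs.add_le _ _
      _ ≤ Complex.abs (1 + z/2 - z^2/2 - 7*z^3/24) + Complex.abs (z^4/24)
            + Complex.abs (31*z^5/720) := by
          have := Complex.abs.add_le (1 + z/2 - z^2/2 - 7*z^3/24) (z^4/24)
          linarith
      _ ≤ Complex.abs (1 + z/2 - z^2/2) + Complex.abs (7*z^3/24) + Complex.abs (z^4/24)
            + Complex.abs (31*z^5/720) := by
          have := Complex.abs.sub_le_add (1 + z/2 - z^2/2) (7*z^3/24)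
          linarith
      _ ≤ Complex.abs (1 + z/2) + Complex.abs (z^2/2) + Complex.abs (7*z^3/24)
            + Complex.abs (z^4/24) + Complex.abs (31*z^5/720) := by
          have := Complex.abs.sub_le_add (1 + z/2) (z^2/2)
          linarith
      _ ≤ (1 + 1/2) + 1/2 + 7/24 + 1/24 + 31/720 := by
          have e0 : Complex.abs (1 + z/2) ≤ 1 + 1/2 := by
            calc Complex.abs (1 + z/2) ≤ Complex.abs 1 + Complex.abs (z/2) :=
                Complex.abs.add_le _ _
              _ ≤ 1 + 1/2 := by
                rw [map_one, map_div₀]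
                simp only [Complex.abs_ofNat]
                have : Complex.abs z / (2:ℝ) ≤ 1/2 := by gcongr
                linarith
          have e1 : Complex.abs (z^2/2) ≤ 1/2 := by
            rw [map_div₀, map_pow]; simp only [Complex.abs_ofNat]
            have := hpow 2; gcongr
          have e2 : Complex.abs (7*z^3/24) ≤ 7/24 := by
            rw [map_div₀, map_mul, map_pow]; simp only [Complex.abs_ofNat]
            have := hpow 3
            calc (7:ℝ) * Complex.abs z ^ 3 / 24 ≤ 7 * 1 / 24 := by gcongr
              _ = 7/24 := by norm_num
          have e3 : Complex.abs (z^4/24) ≤ 1/24 := by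
            rw [map_div₀, map_pow]; simp only [Complex.abs_ofNat]
            have := hpow 4; gcongr
          have e4 : Complex.abs (31*z^5/720) ≤ 31/720 := by
            rw [map_div₀, map_mul, map_pow]; simp only [Complex.abs_ofNat]
            have := hpow 5
            calc (31:ℝ) * Complex.abs z ^ 5 / 720 ≤ 31 * 1 / 720 := by gcongr
              _ = 31/720 := by norm_num
          linarith
      _ ≤ 1711/720 := by norm_num
  have hNt : Complex.abs (Complex.cos z + (1+z)*Complex.sin z) ≤ 337/120 + 21/2000 := by
    calc Complex.abs (Complex.cos z + (1+z)*Complex.sin z)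
        = Complex.abs (auxN5 z + ((Complex.cos z + (1+z)*Complex.sin z) - auxN5 z)) := by
          ring_nf
      _ ≤ Complex.abs (auxN5 z)
          + Complex.abs ((Complex.cos z + (1+z)*Complex.sin z) - auxN5 z) :=
          Complex.abs.add_le _ _
      _ ≤ 337/120 + 21/2000 := by linarith
  -- split
  have hsplit : (Complex.cos z + (1+z)*Complex.sin z) *
      (starRingEnd ℂ) (Complex.cos z * (1 + z - Complex.cos z)/z)
      = auxN5 z * (starRingEnd ℂ) (auxD5 z)
        + ((Complex.cos z + (1+z)*Complex.sin z) - auxN5 z) * (starRingEnd ℂ) (auxD5 z)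
        + (Complex.cos z + (1+z)*Complex.sin z)
          * (starRingEnd ℂ) ((Complex.cos z * (1 + z - Complex.cos z)/z) - auxD5 z) := by
    simp only [map_sub]
    ring
  have hxy : z.re^2 + z.im^2 ≤ 1 := by
    have h2 : Complex.abs z ^ 2 ≤ 1 := hpow 2
    rw [Complex.sq_abs, Complex.normSq_apply] at h2
    nlinarith [h2]
  have hre := auxReEval z.re z.im hxy
  rw [Complex.re_add_im z] at hre
  have e2 : |(((Complex.cos z + (1+z)*Complex.sin z) - auxN5 z)
      * (starRingEnd ℂ) (auxD5 z)).re| ≤ 21/2000 * (1711/720) := by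
    calc |(((Complex.cos z + (1+z)*Complex.sin z) - auxN5 z)
          * (starRingEnd ℂ) (auxD5 z)).re|
        ≤ Complex.abs (((Complex.cos z + (1+z)*Complex.sin z) - auxN5 z)
          * (starRingEnd ℂ) (auxD5 z)) := Complex.abs_re_le_abs _
      _ = Complex.abs ((Complex.cos z + (1+z)*Complex.sin z) - auxN5 z)
          * Complex.abs (auxD5 z) := by rw [map_mul, Complex.abs_conj]
      _ ≤ 21/2000 * (1711/720) :=
          mul_le_mul hN hD5abs (Complex.abs.nonneg _) (by norm_num)
  have e3 : |((Complex.cos z + (1+z)*Complex.sin z)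
      * (starRingEnd ℂ) ((Complex.cos z * (1 + z - Complex.cos z)/z) - auxD5 z)).re|
      ≤ (337/120 + 21/2000) * (1/120) := by
    calc |((Complex.cos z + (1+z)*Complex.sin z)
          * (starRingEnd ℂ) ((Complex.cos z * (1 + z - Complex.cos z)/z) - auxD5 z)).re|
        ≤ Complex.abs ((Complex.cos z + (1+z)*Complex.sin z)
          * (starRingEnd ℂ) ((Complex.cos z * (1 + z - Complex.cos z)/z) - auxD5 z)) :=
          Complex.abs_re_le_abs _
      _ = Complex.abs (Complex.cos z + (1+z)*Complex.sin z)
          * Complex.abs ((Complex.cos z * (1 + z - Complex.cos z)/z) - auxD5 z) := by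
          rw [map_mul, Complex.abs_conj]
      _ ≤ (337/120 + 21/2000) * (1/120) :=
          mul_le_mul hNt hD (Complex.abs.nonneg _) (by norm_num)
  rw [hsplit, Complex.add_re, Complex.add_re]
  have l2 := abs_le.mp e2
  have l3 := abs_le.mp e3
  have : (3/50 : ℝ) - 21/2000 * (1711/720) - (337/120 + 21/2000) * (1/120) > 0 := by norm_num
  linarith [hre, l2.1, l3.1]

theorem stmt19 :
    Qnc 0 = 0 ∧ deriv Qnc 0 ≠ 0 ∧
    ∀ z ∈ ball (0:ℂ) 1, z ≠ 0 → 0 < (z * deriv Qnc z / Qnc z).re := by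
  have hQder : ∀ z : ℂ, Complex.cos z ≠ 0 → HasDerivAt Qnc
      (((1 + Complex.sin z) * Complex.cos z
        - (1 + z - Complex.cos z) * (-Complex.sin z)) / Complex.cos z ^ 2) z := by
    intro z hcos
    have h1 : HasDerivAt (fun w : ℂ => 1 + w - Complex.cos w) (1 + Complex.sin z) z := by
      have := ((hasDerivAt_id' z).const_add (1:ℂ)).sub (Complex.hasDerivAt_cos z)
      rw [sub_neg_eq_add] at this; exact this
    exact h1.div (Complex.hasDerivAt_cos z) hcos
  refine ⟨?_, ?_, ?_⟩
  · simp [Qnc]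
  · have hcos0 : Complex.cos (0:ℂ) ≠ 0 := by simp [Complex.cos_zero]
    have h := hQder 0 hcos0
    have hval : ((1 + Complex.sin 0) * Complex.cos 0
        - (1 + 0 - Complex.cos 0) * (-Complex.sin 0)) / Complex.cos 0 ^ 2 = 1 := by
      simp [Complex.sin_zero, Complex.cos_zero]
    rw [h.deriv, hval]
    exact one_ne_zero
  · intro z hz h0
    have hzlt : Complex.abs z < 1 := by
      rw [mem_ball_zero_iff] at hz
      simpa [Complex.norm_eq_abs] using hz
    have hzle : Complex.abs z ≤ 1 := hzlt.le
    have hcos : Complex.cos z ≠ 0 := auxCosNe z hzle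
    have key := auxCore z hzle h0
    have hP : 1 + z - Complex.cos z ≠ 0 := by
      intro h'
      rw [h'] at key
      simp at key
    have hQnz : Qnc z ≠ 0 := by
      rw [Qnc]
      exact div_ne_zero hP hcos
    have hder : deriv Qnc z = (Complex.cos z + (1+z)*Complex.sin z) / Complex.cos z ^ 2 := by
      rw [(hQder z hcos).deriv]
      congr 1
      ring
    have hB : Complex.cos z * (1 + z - Complex.cos z)/z ≠ 0 :=
      div_ne_zero (mul_ne_zero hcos hP) h0
    have hwe : z * deriv Qnc z / Qnc z
        = (Complex.cos z + (1+z)*Complex.sin z)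
          / (Complex.cos z * (1 + z - Complex.cos z)/z) := by
      rw [hder, Qnc]
      field_simp
    rw [hwe]
    have h5 : (Complex.cos z + (1+z)*Complex.sin z)
        / (Complex.cos z * (1 + z - Complex.cos z)/z)
        = ((Complex.cos z + (1+z)*Complex.sin z)
          * (starRingEnd ℂ) (Complex.cos z * (1 + z - Complex.cos z)/z))
          * ((Complex.normSq (Complex.cos z * (1 + z - Complex.cos z)/z))⁻¹ : ℝ) := by
      rw [div_eq_mul_inv, Complex.inv_def]
      push_cast
      ring
    rw [h5, Complex.mul_re]
    simp only [Complex.ofReal_re, Complex.ofReal_im, mul_zero, sub_zero]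
    exact mul_pos key (inv_pos.2 (Complex.normSq_pos.2 hB))
end
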